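/- arXiv:2307.00401 — 6 statements merged into one kernel-verified Lean document; each statement's English description precedes it below -/
import Mathlib

section
/- Let X be a Helly graph such that every strictly increasing chain of round cliques of X has length at most N (i.e. X has finite combinatorial dimension). Then every graph automorphism g of X is either elliptic or hyperbolic: either the orbit {g^n · x : n ∈ ℤ} is bounded for every vertex x of X, or for every vertex x the map n ∈ ℤ ↦ g^n · x ∈ X is a quasi-isometric embedding. -/
namespace HellyPaper

variable {V : Type*}

/-- The combinatorial ball of radius `r` around `x` in the graph `G`. -/
def ball (G : SimpleGraph V) (x : V) (r : ℕ) : Set V := {y | G.dist x y ≤ r}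

/-- A Helly graph: a connected graph in which every family of pairwise
intersecting combinatorial balls has nonempty global intersection. -/
def IsHellyGraph (G : SimpleGraph V) : Prop :=
  G.Connected ∧ ∀ S : Set (V × ℕ),
    (∀ p ∈ S, ∀ q ∈ S, (ball G p.1 p.2 ∩ ball G q.1 q.2).Nonempty) →
    (⋂ p ∈ S, ball G p.1 p.2).Nonempty

/-- A round clique: a nonempty clique which is an intersection of a family of
combinatorial balls. -/
def IsRoundClique (G : SimpleGraph V) (σ : Set V) : Prop :=
  σ.Nonempty ∧ G.IsClique σ ∧ ∃ S : Set (V × ℕ), σ = ⋂ p ∈ S, ball G p.1 p.2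

/-- Every strictly increasing chain of round cliques σ₀ ⊊ σ₁ ⊊ ⋯ ⊊ σ_k has k ≤ N
(combinatorial dimension at most N, following Corollary C of the paper). -/
def DimAtMost (G : SimpleGraph V) (N : ℕ) : Prop :=
  ∀ (k : ℕ) (c : Fin (k + 1) → Set V),
    (∀ i, IsRoundClique G (c i)) → StrictMono c → k ≤ N

/-- The injective hull of `G`, realized as the set of extremal functions. -/
def InjHull (G : SimpleGraph V) : Set (V → ℝ) :=
  {f | (∀ x y : V, (G.dist x y : ℝ) ≤ f x + f y) ∧
    ∀ x : V, IsLUB (Set.range fun y => (G.dist x y : ℝ) - f y) (f x)}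

/-- The sup metric d∞ on the injective hull. -/
noncomputable def supDist (f g : V → ℝ) : ℝ := ⨆ x, |f x - g x|

/-- The isometric action of a graph automorphism on the injective hull:
(g·f)(x) = f(g⁻¹·x). -/
def hullAct (g : Equiv.Perm V) (f : V → ℝ) : V → ℝ := fun x => f (g⁻¹ x)

/-- A permutation of the vertices is a graph automorphism if it preserves adjacency. -/
def IsGraphAut (G : SimpleGraph V) (g : Equiv.Perm V) : Prop :=
  ∀ x y, G.Adj (g x) (g y) ↔ G.Adj x y

/-- The round clique associated to a point of the injective hull:
φ(p) = ⋂_{x ∈ X} B(x, ⌈p(x)⌉). -/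
def phi (G : SimpleGraph V) (p : V → ℝ) : Set V :=
  {z | ∀ x : V, (G.dist x z : ℝ) ≤ (⌈p x⌉ : ℝ)}

/-- The values of `p` all lie in (1/2)ℕ. -/
def halfInt (p : V → ℝ) : Prop := ∀ x, ∃ k : ℕ, p x = (k : ℝ) / 2

end HellyPaper

namespace HellyPaper

/-! ### Auxiliary material for the proof of the classification theorem.

The proof of the main theorem `stmt0` below runs as follows.  If every orbit is
bounded we are done.  Otherwise we show (lemma `key`) that the stable translation
length `τ = inf_k d(x₀, gᵏx₀)/k` is positive, which readily yields that every
orbit map is a quasi-isometric embedding (τ·k ≤ d(x₀,gᵏx₀) ≤ k·d(x₀,gx₀)).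

The heart of the matter is `key`: if `τ = 0` then all orbits are bounded.
Given `τ = 0`, for any `c > 0` the weighted Busemann-type function
`f(y) = sup_i (d(y, gⁱx₀) - c|i|)` is a finite admissible function whose
displacement under `g` is at most `c`.  Lang's extremalization iteration
`J(f) = (f + f*)/2` converges to an *extremal* function `p` (`p* = p`), still
with displacement `≤ c`, where `c := 1/(8(N+2))`.  The integer ceilings of the
translates `p_j = p ∘ g⁻ʲ` (`0 ≤ j ≤ N+2`) define round cliques
`σ_j = ⋂_x B(x, ⌈p_j(x)⌉) = gʲσ₀` (cliques because `p` is extremal), and since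
the total drift `(i+j)c ≤ 1/4` is beaten by the integrality of the radii, the
Helly property applies to the whole family: ⋂_{j≤N+2} σ_j ≠ ∅.  The decreasing
chain `T_j = σ₀ ∩ ⋯ ∩ σ_j` of round cliques must stabilize (dimension at most
`N`), giving `A` with `A ⊆ gA`; the increasing chain `gⁱA` of round cliques must
also stabilize, giving `A = gA`, a `g`-invariant clique.  Any of its points has
orbit of diameter `≤ 1`, so all orbits are bounded — contradiction. -/

lemma isGraphAut_mul {G : SimpleGraph V} {p q : Equiv.Perm V}
    (hp : IsGraphAut G p) (hq : IsGraphAut G q) : IsGraphAut G (p * q) := by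
  intro x y
  simpa [Equiv.Perm.mul_apply] using (hp (q x) (q y)).trans (hq x y)

lemma isGraphAut_one {G : SimpleGraph V} : IsGraphAut G (1 : Equiv.Perm V) := by
  intro x y; simp

lemma isGraphAut_inv {G : SimpleGraph V} {p : Equiv.Perm V}
    (hp : IsGraphAut G p) : IsGraphAut G p⁻¹ := by
  intro x y
  have := hp (p⁻¹ x) (p⁻¹ y)
  simpa using this.symm

lemma isGraphAut_zpow {G : SimpleGraph V} {g : Equiv.Perm V}
    (hg : IsGraphAut G g) (m : ℤ) : IsGraphAut G (g ^ m) := by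
  let S : Subgroup (Equiv.Perm V) :=
  { carrier := {h | IsGraphAut G h}
    mul_mem' := fun ha hb => isGraphAut_mul ha hb
    one_mem' := isGraphAut_one
    inv_mem' := fun ha => isGraphAut_inv ha }
  exact S.zpow_mem (hg : g ∈ S) m

lemma aut_dist_le {G : SimpleGraph V} (hc : G.Connected) {h : Equiv.Perm V}
    (hh : IsGraphAut G h) (a b : V) : G.dist (h a) (h b) ≤ G.dist a b := by
  obtain ⟨w, hw⟩ := (hc a b).exists_walk_length_eq_dist
  calc G.dist (h a) (h b)
      ≤ (w.map ⟨h, fun {x y} hxy => (hh x y).mpr hxy⟩).length := SimpleGraph.dist_le _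
    _ = G.dist a b := by simpa using hw

lemma aut_dist {G : SimpleGraph V} (hc : G.Connected) {h : Equiv.Perm V}
    (hh : IsGraphAut G h) (a b : V) : G.dist (h a) (h b) = G.dist a b := by
  refine le_antisymm (aut_dist_le hc hh a b) ?_
  have := aut_dist_le hc (isGraphAut_inv hh) (h a) (h b)
  simpa using this

lemma zpow_dist {G : SimpleGraph V} (hc : G.Connected) {g : Equiv.Perm V}
    (hg : IsGraphAut G g) (m : ℤ) (a b : V) :
    G.dist ((g ^ m) a) ((g ^ m) b) = G.dist a b :=
  aut_dist hc (isGraphAut_zpow hg m) a b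

/-- `d(g^m x, g^n x) = d(x, g^(n-m) x)`. -/
lemma orbit_dist_shift {G : SimpleGraph V} (hc : G.Connected) {g : Equiv.Perm V}
    (hg : IsGraphAut G g) (m n : ℤ) (x : V) :
    G.dist ((g ^ m) x) ((g ^ n) x) = G.dist x ((g ^ (n - m)) x) := by
  have h1 : (g ^ n) x = (g ^ m) ((g ^ (n - m)) x) := by
    rw [← Equiv.Perm.mul_apply, ← zpow_add]
    norm_num
  rw [h1, zpow_dist hc hg m]

lemma orbit_dist_neg {G : SimpleGraph V} (hc : G.Connected) {g : Equiv.Perm V}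
    (hg : IsGraphAut G g) (k : ℤ) (x : V) :
    G.dist x ((g ^ (-k)) x) = G.dist x ((g ^ k) x) := by
  have := orbit_dist_shift hc hg k 0 x
  simpa [SimpleGraph.dist_comm] using this.symm

lemma orbit_dist_natAbs {G : SimpleGraph V} (hc : G.Connected) {g : Equiv.Perm V}
    (hg : IsGraphAut G g) (m n : ℤ) (x : V) :
    G.dist ((g ^ m) x) ((g ^ n) x) = G.dist x ((g ^ ((n - m).natAbs : ℤ)) x) := by
  rw [orbit_dist_shift hc hg m n x]
  rcases le_or_gt m n with h | h
  · rw [Int.natAbs_of_nonneg (by omega : (0:ℤ) ≤ n - m)]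
  · set k : ℕ := (n - m).natAbs with hk
    have hnm : n - m = -(k : ℤ) := by omega
    rw [hnm, orbit_dist_neg hc hg]

lemma orbit_subadd {G : SimpleGraph V} (hc : G.Connected) {g : Equiv.Perm V}
    (hg : IsGraphAut G g) (k l : ℤ) (x : V) :
    G.dist x ((g ^ (k + l)) x) ≤ G.dist x ((g ^ k) x) + G.dist x ((g ^ l) x) := by
  have h2 : G.dist ((g ^ k) x) ((g ^ (k + l)) x) = G.dist x ((g ^ l) x) := by
    rw [orbit_dist_shift hc hg k (k + l) x]; congr 2; ring
  calc G.dist x ((g ^ (k + l)) x)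
      ≤ G.dist x ((g ^ k) x) + G.dist ((g ^ k) x) ((g ^ (k + l)) x) := hc.dist_triangle
    _ = _ := by rw [h2]

lemma orbit_linear {G : SimpleGraph V} (hc : G.Connected) {g : Equiv.Perm V}
    (hg : IsGraphAut G g) (x : V) :
    ∀ k : ℕ, G.dist x ((g ^ (k : ℤ)) x) ≤ k * G.dist x (g x) := by
  intro k
  induction k with
  | zero => simp [SimpleGraph.dist_self]
  | succ k ih =>
    have h := orbit_subadd hc hg (k : ℤ) 1 x
    have h1 : ((k : ℤ) + 1) = ((k + 1 : ℕ) : ℤ) := by push_cast; ring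
    rw [h1] at h
    have h2 : G.dist x ((g ^ (1 : ℤ)) x) = G.dist x (g x) := by norm_num
    rw [h2] at h
    calc G.dist x ((g ^ ((k + 1 : ℕ) : ℤ)) x) ≤ G.dist x ((g ^ (k : ℤ)) x) + G.dist x (g x) := h
      _ ≤ k * G.dist x (g x) + G.dist x (g x) := by omega
      _ = (k + 1) * G.dist x (g x) := by ring

/-- In a connected graph, a point on a geodesic splits the distance. -/
lemma exists_between {G : SimpleGraph V} (hc : G.Connected) (x y : V) (r : ℕ) :
    ∃ u : V, G.dist x u ≤ r ∧ G.dist u y ≤ G.dist x y - r := by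
  induction r generalizing x with
  | zero => exact ⟨x, by simp [SimpleGraph.dist_self]⟩
  | succ r ih =>
    rcases Nat.eq_zero_or_pos (G.dist x y) with h0 | hpos
    · have hxy : x = y := (hc.dist_eq_zero_iff).mp h0
      exact ⟨x, by simp [SimpleGraph.dist_self], by simp [h0]⟩
    · obtain ⟨w, hw⟩ := (hc x y).exists_walk_length_eq_dist
      cases w with
      | nil => simp [SimpleGraph.dist_self] at hpos
      | cons hadj w' =>
        rename_i v
        have hvy : G.dist v y ≤ G.dist x y - 1 := by
          have := SimpleGraph.dist_le w'
          simp [SimpleGraph.Walk.length_cons] at hw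
          omega
        obtain ⟨u, hu1, hu2⟩ := ih v
        refine ⟨u, ?_, by omega⟩
        have hxv : G.dist x v ≤ 1 := by
          have : G.dist x v ≤ (SimpleGraph.Walk.cons hadj SimpleGraph.Walk.nil).length :=
            SimpleGraph.dist_le _
          simpa using this
        calc G.dist x u ≤ G.dist x v + G.dist v u := hc.dist_triangle
          _ ≤ 1 + r := by omega
          _ = r + 1 := by omega

/-- Two balls whose radii sum to at least the distance between the centers meet. -/
lemma ball_inter_nonempty {G : SimpleGraph V} (hc : G.Connected) {x y : V} {r s : ℕ}
    (h : G.dist x y ≤ r + s) : (ball G x r ∩ ball G y s).Nonempty := by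
  obtain ⟨u, hu1, hu2⟩ := exists_between hc x y r
  refine ⟨u, hu1, ?_⟩
  show G.dist y u ≤ s
  rw [SimpleGraph.dist_comm]
  omega

lemma mem_ballInter_iff {G : SimpleGraph V} {S : Set (V × ℕ)} {z : V} :
    z ∈ ⋂ p ∈ S, ball G p.1 p.2 ↔ ∀ p ∈ S, G.dist p.1 z ≤ p.2 := by
  simp only [Set.mem_iInter]
  rfl

/-- The image of a round clique under a graph automorphism is a round clique. -/
lemma isRoundClique_image {G : SimpleGraph V} (hc : G.Connected) {h : Equiv.Perm V}
    (hh : IsGraphAut G h) {σ : Set V} (hσ : IsRoundClique G σ) :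
    IsRoundClique G (h '' σ) := by
  obtain ⟨⟨z, hz⟩, hclique, S, hS⟩ := hσ
  refine ⟨⟨h z, ⟨z, hz, rfl⟩⟩, ?_, ⟨(fun pr => (h pr.1, pr.2)) '' S, ?_⟩⟩
  · rintro _ ⟨a, ha, rfl⟩ _ ⟨b, hb, rfl⟩ hne
    have hab : a ≠ b := fun hab => hne (by rw [hab])
    exact (hh a b).mpr (hclique ha hb hab)
  · ext w
    constructor
    · rintro ⟨a, ha, rfl⟩
      rw [hS] at ha
      rw [mem_ballInter_iff] at ha ⊢
      rintro _ ⟨pr, hpr, rfl⟩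
      show G.dist (h pr.1) (h a) ≤ pr.2
      rw [aut_dist hc hh]
      exact ha pr hpr
    · intro hw
      rw [mem_ballInter_iff] at hw
      refine ⟨h⁻¹ w, ?_, by simp⟩
      rw [hS, mem_ballInter_iff]
      intro pr hpr
      have h1 := hw (h pr.1, pr.2) ⟨pr, hpr, rfl⟩
      have h2 : G.dist (h pr.1) (h (h⁻¹ w)) = G.dist pr.1 (h⁻¹ w) := aut_dist hc hh _ _
      simp only [show ∀ a, h (h⁻¹ a) = a from fun a => by simp] at h2
      show G.dist pr.1 (h⁻¹ w) ≤ pr.2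
      rw [← h2]
      exact h1

/-! ### Admissible and extremal functions -/

/-- Admissibility: `d(x,y) ≤ f x + f y`. -/
def Adm (G : SimpleGraph V) (f : V → ℝ) : Prop :=
  ∀ x y, (G.dist x y : ℝ) ≤ f x + f y

/-- The dual transform `f*(x) = sup_y (d(x,y) - f y)`. -/
noncomputable def starF (G : SimpleGraph V) (f : V → ℝ) : V → ℝ :=
  fun x => sSup (Set.range fun y => (G.dist x y : ℝ) - f y)

section StarBasic
set_option linter.unusedSectionVars false
variable [Nonempty V] {G : SimpleGraph V} {f f' : V → ℝ}

lemma adm_nonneg (hf : Adm G f) (x : V) : 0 ≤ f x := by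
  have := hf x x
  simp [SimpleGraph.dist_self] at this
  linarith

lemma star_bddAbove (hf : Adm G f) (x : V) :
    BddAbove (Set.range fun y => (G.dist x y : ℝ) - f y) := by
  refine ⟨f x, ?_⟩
  rintro t ⟨y, rfl⟩
  have := hf x y
  simp only
  linarith

lemma le_starF (hf : Adm G f) (x y : V) : (G.dist x y : ℝ) - f y ≤ starF G f x :=
  le_csSup (star_bddAbove hf x) ⟨y, rfl⟩

lemma starF_le {b : ℝ} (x : V)
    (h : ∀ y, (G.dist x y : ℝ) - f y ≤ b) : starF G f x ≤ b :=
  csSup_le (Set.range_nonempty _) (by rintro t ⟨y, rfl⟩; exact h y)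

lemma starF_le_self (hf : Adm G f) (x : V) : starF G f x ≤ f x :=
  starF_le x (fun y => by have := hf x y; linarith)

lemma starF_antitone (hf : Adm G f) (h : ∀ x, f x ≤ f' x) (x : V) :
    starF G f' x ≤ starF G f x :=
  starF_le x (fun y => le_trans (by have := h y; linarith) (le_starF hf x y))

/-- Lang's iteration step towards the extremal functions. -/
noncomputable def Jmap (G : SimpleGraph V) (f : V → ℝ) : V → ℝ :=
  fun x => (f x + starF G f x) / 2

lemma Jmap_adm (hf : Adm G f) : Adm G (Jmap G f) := by
  intro x y
  have h1 : (G.dist x y : ℝ) - f x ≤ starF G f y := by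
    have := le_starF hf y x
    rwa [SimpleGraph.dist_comm] at this
  have h2 : (G.dist x y : ℝ) - f y ≤ starF G f x := le_starF hf x y
  show (G.dist x y : ℝ) ≤ (f x + starF G f x) / 2 + (f y + starF G f y) / 2
  linarith

lemma Jmap_le (hf : Adm G f) (x : V) : Jmap G f x ≤ f x := by
  have := starF_le_self hf x
  show (f x + starF G f x) / 2 ≤ f x
  linarith

lemma Jmap_defect (hf : Adm G f) (x : V) :
    Jmap G f x - starF G (Jmap G f) x ≤ (f x - starF G f x) / 2 := by
  have h1 : starF G f x ≤ starF G (Jmap G f) x :=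
    starF_antitone (Jmap_adm hf) (Jmap_le hf) x
  show (f x + starF G f x) / 2 - starF G (Jmap G f) x ≤ _
  linarith

lemma starF_dist_le (hf : Adm G f) (hf' : Adm G f') {c : ℝ}
    (h : ∀ y, |f y - f' y| ≤ c) (x : V) : |starF G f x - starF G f' x| ≤ c := by
  rw [abs_le]
  constructor
  · have : starF G f' x ≤ starF G f x + c := by
      refine starF_le x (fun y => ?_)
      have h1 := le_starF hf x y
      have h2 := abs_le.mp (h y)
      linarith
    linarith
  · have : starF G f x ≤ starF G f' x + c := by
      refine starF_le x (fun y => ?_)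
      have h1 := le_starF hf' x y
      have h2 := abs_le.mp (h y)
      linarith
    linarith

lemma Jmap_dist_le (hf : Adm G f) (hf' : Adm G f') {c : ℝ}
    (h : ∀ y, |f y - f' y| ≤ c) (x : V) : |Jmap G f x - Jmap G f' x| ≤ c := by
  have h1 := abs_le.mp (starF_dist_le hf hf' h x)
  have h2 := abs_le.mp (h x)
  rw [abs_le]
  constructor <;> (show _ ≤ _; simp only [Jmap]; cases h1; cases h2; try linarith)

lemma starF_comp (hf : Adm G f) {m : Equiv.Perm V}
    (hm : ∀ a b, G.dist (m a) (m b) = G.dist a b) (x : V) :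
    starF G (fun y => f (m y)) x = starF G f (m x) := by
  have hrange : (Set.range fun y => (G.dist x y : ℝ) - f (m y)) =
      (Set.range fun w => (G.dist (m x) w : ℝ) - f w) := by
    ext t
    constructor
    · rintro ⟨y, rfl⟩
      exact ⟨m y, by simp only [hm x y]⟩
    · rintro ⟨w, rfl⟩
      refine ⟨m⁻¹ w, ?_⟩
      have : G.dist x (m⁻¹ w) = G.dist (m x) w := by
        conv_rhs => rw [show w = m (m⁻¹ w) by simp]
        rw [hm]
      simpa using this
  unfold starF
  rw [hrange]

lemma Adm_comp (hf : Adm G f) {m : Equiv.Perm V}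
    (hm : ∀ a b, G.dist (m a) (m b) = G.dist a b) :
    Adm G (fun y => f (m y)) := by
  intro x y
  have := hf (m x) (m y)
  rwa [hm] at this

lemma Jmap_comp (hf : Adm G f) {m : Equiv.Perm V}
    (hm : ∀ a b, G.dist (m a) (m b) = G.dist a b) (x : V) :
    Jmap G (fun y => f (m y)) x = Jmap G f (m x) := by
  simp only [Jmap, starF_comp hf hm]

end StarBasic

section Extremalize
set_option linter.unusedSectionVars false
variable [Nonempty V] {G : SimpleGraph V}

noncomputable def iterJ (G : SimpleGraph V) (f : V → ℝ) : ℕ → (V → ℝ)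
  | 0 => f
  | (k+1) => Jmap G (iterJ G f k)

variable {f : V → ℝ} {g : Equiv.Perm V} {c : ℝ}

lemma iterJ_adm (hf : Adm G f) : ∀ k, Adm G (iterJ G f k) := by
  intro k
  induction k with
  | zero => exact hf
  | succ k ih => exact Jmap_adm ih

lemma iterJ_succ_le (hf : Adm G f) (k : ℕ) (x : V) :
    iterJ G f (k+1) x ≤ iterJ G f k x :=
  Jmap_le (iterJ_adm hf k) x

lemma iterJ_anti (hf : Adm G f) {k l : ℕ} (hkl : k ≤ l) (x : V) :
    iterJ G f l x ≤ iterJ G f k x := by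
  induction l with
  | zero => simp_all
  | succ l ih =>
    rcases Nat.lt_or_ge k (l+1) with h | h
    · exact le_trans (iterJ_succ_le hf l x) (ih (by omega))
    · have : k = l + 1 := by omega
      subst this; rfl

lemma iterJ_defect (hf : Adm G f) (k : ℕ) (x : V) :
    iterJ G f k x - starF G (iterJ G f k) x ≤ (f x - starF G f x) / 2 ^ k := by
  induction k with
  | zero => simp [iterJ]
  | succ k ih =>
    have h1 := Jmap_defect (iterJ_adm hf k) x
    calc iterJ G f (k+1) x - starF G (iterJ G f (k+1)) x
        ≤ (iterJ G f k x - starF G (iterJ G f k) x) / 2 := h1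
      _ ≤ ((f x - starF G f x) / 2 ^ k) / 2 := by linarith
      _ = (f x - starF G f x) / 2 ^ (k+1) := by ring

lemma iterJ_drift (hf : Adm G f)
    (hm : ∀ a b, G.dist (g a) (g b) = G.dist a b)
    (hdrift : ∀ y, |f (g y) - f y| ≤ c) (k : ℕ) :
    ∀ y, |iterJ G f k (g y) - iterJ G f k y| ≤ c := by
  induction k with
  | zero => exact hdrift
  | succ k ih =>
    intro y
    have hcomp : iterJ G f (k+1) (g y) = Jmap G (fun z => iterJ G f k (g z)) y :=
      (Jmap_comp (iterJ_adm hf k) hm y).symm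
    rw [hcomp]
    exact Jmap_dist_le (Adm_comp (iterJ_adm hf k) hm) (iterJ_adm hf k) ih y

/-- Extremalization with equivariant drift control. -/
lemma exists_extremal_drift (hf : Adm G f)
    (hm : ∀ a b, G.dist (g a) (g b) = G.dist a b)
    (hdrift : ∀ y, |f (g y) - f y| ≤ c) :
    ∃ p : V → ℝ, Adm G p ∧ (∀ x, starF G p x = p x) ∧
      (∀ y, |p (g y) - p y| ≤ c) ∧ (∀ x, 0 ≤ p x) := by
  set F : ℕ → V → ℝ := iterJ G f with hF
  have hFadm : ∀ k, Adm G (F k) := iterJ_adm hf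
  have hFbdd : ∀ x, BddBelow (Set.range fun k => F k x) :=
    fun x => ⟨0, by rintro t ⟨k, rfl⟩; exact adm_nonneg (hFadm k) x⟩
  set p : V → ℝ := fun x => ⨅ k, F k x with hp
  have hpleF : ∀ k x, p x ≤ F k x := fun k x => ciInf_le (hFbdd x) k
  have hp0 : ∀ x, 0 ≤ p x := by
    intro x
    exact le_ciInf (fun k => adm_nonneg (hFadm k) x)
  have hpadm : Adm G p := by
    intro x y
    refine le_of_forall_pos_le_add (fun ε hε => ?_)
    obtain ⟨k₁, hk₁⟩ := exists_lt_of_ciInf_lt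
      (show ⨅ k, F k x < p x + ε / 2 by exact lt_of_le_of_lt (le_refl _) (by linarith))
    obtain ⟨k₂, hk₂⟩ := exists_lt_of_ciInf_lt
      (show ⨅ k, F k y < p y + ε / 2 by exact lt_of_le_of_lt (le_refl _) (by linarith))
    set k := max k₁ k₂
    have h1 : F k x ≤ F k₁ x := iterJ_anti hf (le_max_left _ _) x
    have h2 : F k y ≤ F k₂ y := iterJ_anti hf (le_max_right _ _) y
    have := hFadm k x y
    linarith
  have hpstar : ∀ x, starF G p x = p x := by
    intro x
    refine le_antisymm (starF_le_self hpadm x) ?_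
    refine le_of_forall_pos_le_add (fun ε hε => ?_)
    set D : ℝ := f x - starF G f x with hD
    have hD0 : 0 ≤ D := by
      have := starF_le_self hf x
      simp only [hD]; linarith
    obtain ⟨k, hk⟩ : ∃ k : ℕ, D / 2 ^ k < ε := by
      obtain ⟨k, hk⟩ := exists_pow_lt_of_lt_one
        (show (0:ℝ) < ε / (D + 1) by positivity) (show (1:ℝ)/2 < 1 by norm_num)
      refine ⟨k, ?_⟩
      have h2 : ((1:ℝ)/2) ^ k = 1 / 2 ^ k := by
        rw [div_pow]; norm_num
      rw [h2] at hk
      have h3 : D / 2 ^ k ≤ (D + 1) * (1 / 2 ^ k) := by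
        rw [mul_one_div]
        gcongr
        linarith
      have h4 : (D + 1) * (1 / 2 ^ k) < (D + 1) * (ε / (D + 1)) := by
        apply mul_lt_mul_of_pos_left hk (by linarith)
      have h5 : (D + 1) * (ε / (D + 1)) = ε := by
        field_simp
      linarith
    have h1 : starF G (F k) x ≤ starF G p x :=
      starF_antitone hpadm (fun z => hpleF k z) x
    have h2 : F k x - starF G (F k) x ≤ D / 2 ^ k := iterJ_defect hf k x
    have h3 : p x ≤ F k x := hpleF k x
    linarith
  have hpdrift : ∀ y, |p (g y) - p y| ≤ c := by
    intro y
    have h1 : ∀ k, |F k (g y) - F k y| ≤ c := fun k => iterJ_drift hf hm hdrift k y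
    rw [abs_le]
    constructor
    · have : p y ≤ p (g y) + c := by
        refine le_of_forall_pos_le_add (fun ε hε => ?_)
        obtain ⟨k, hk⟩ := exists_lt_of_ciInf_lt
          (show ⨅ k, F k (g y) < p (g y) + ε by
            exact lt_of_le_of_lt (le_refl _) (by linarith))
        have h2 := (abs_le.mp (h1 k)).1
        have h3 : p y ≤ F k y := hpleF k y
        linarith
      linarith
    · refine le_of_forall_pos_le_add (fun ε hε => ?_)
      obtain ⟨k, hk⟩ := exists_lt_of_ciInf_lt
        (show ⨅ k, F k y < p y + ε by exact lt_of_le_of_lt (le_refl _) (by linarith))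
      have h2 := (abs_le.mp (h1 k)).2
      have h3 : p (g y) ≤ F k (g y) := hpleF k (g y)
      linarith
  exact ⟨p, hpadm, hpstar, hpdrift, hp0⟩

end Extremalize

/-! ### The weighted Busemann function of a slowly drifting orbit -/

lemma exists_orbit_adm {G : SimpleGraph V} (hc : G.Connected) {g : Equiv.Perm V}
    (hg : IsGraphAut G g) (x₀ : V) {c B : ℝ} (hc0 : 0 < c) (hB0 : 0 ≤ B)
    (hgrow : ∀ i : ℕ, (G.dist x₀ ((g ^ (i : ℤ)) x₀) : ℝ) ≤ c / 2 * i + B) :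
    ∃ f : V → ℝ, Adm G f ∧ ∀ y, |f (g y) - f y| ≤ c := by
  set u : ℤ → V := fun i => (g ^ i) x₀ with hu
  have hu0 : u 0 = x₀ := by simp [hu]
  have hushift : ∀ i : ℤ, g (u (i - 1)) = u i := by
    intro i
    show g ((g ^ (i-1)) x₀) = (g ^ i) x₀
    rw [← Equiv.Perm.mul_apply]
    congr 1
    have h1 : g ^ (1 + (i-1) : ℤ) = g ^ (1:ℤ) * g ^ (i-1 : ℤ) := zpow_add g 1 (i-1)
    rw [zpow_one] at h1
    rw [← h1]
    norm_num
  have hdux : ∀ i : ℤ, (G.dist x₀ (u i) : ℝ) ≤ c / 2 * (i.natAbs : ℝ) + B := by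
    intro i
    have h1 : G.dist x₀ (u i) = G.dist x₀ ((g ^ ((i).natAbs : ℤ)) x₀) := by
      have := orbit_dist_natAbs hc hg 0 i x₀
      simpa [hu] using this
    rw [h1]
    exact hgrow i.natAbs
  set T : V → ℤ → ℝ := fun y i => (G.dist y (u i) : ℝ) - c * (i.natAbs : ℝ) with hT
  have hbdd : ∀ y, BddAbove (Set.range (T y)) := by
    intro y
    refine ⟨(G.dist y x₀ : ℝ) + B, ?_⟩
    rintro t ⟨i, rfl⟩
    have h1 : (G.dist y (u i) : ℝ) ≤ (G.dist y x₀ : ℝ) + (G.dist x₀ (u i) : ℝ) := by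
      exact_mod_cast hc.dist_triangle (v := x₀)
    have h2 := hdux i
    have h3 : (0:ℝ) ≤ (i.natAbs : ℝ) := by positivity
    show (G.dist y (u i) : ℝ) - c * (i.natAbs : ℝ) ≤ _
    nlinarith
  set f : V → ℝ := fun y => sSup (Set.range (T y)) with hf
  have hfge : ∀ y, (G.dist y x₀ : ℝ) ≤ f y := by
    intro y
    have : T y 0 = (G.dist y x₀ : ℝ) := by simp [hT, hu0]
    rw [← this]
    exact le_csSup (hbdd y) ⟨0, rfl⟩
  have hfadm : Adm G f := by
    intro x y
    have h1 : (G.dist x y : ℝ) ≤ (G.dist x x₀ : ℝ) + (G.dist y x₀ : ℝ) := by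
      have := hc.dist_triangle (u := x) (v := x₀) (w := y)
      have h2 : G.dist x₀ y = G.dist y x₀ := SimpleGraph.dist_comm
      exact_mod_cast by omega
    have := hfge x
    have := hfge y
    linarith
  refine ⟨f, hfadm, fun y => ?_⟩
  have hnatAbs : ∀ i : ℤ, ((i-1).natAbs : ℝ) ≤ (i.natAbs : ℝ) + 1 := by
    intro i
    have : (i-1).natAbs ≤ i.natAbs + 1 := by omega
    exact_mod_cast this
  have hnatAbs2 : ∀ i : ℤ, ((i+1).natAbs : ℝ) ≤ (i.natAbs : ℝ) + 1 := by
    intro i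
    have : (i+1).natAbs ≤ i.natAbs + 1 := by omega
    exact_mod_cast this
  have hdg : ∀ i : ℤ, G.dist (g y) (u i) = G.dist y (u (i - 1)) := by
    intro i
    conv_lhs => rw [← hushift i]
    exact aut_dist hc hg y (u (i-1))
  rw [abs_le]
  constructor
  · -- -c ≤ f (g y) - f y, i.e. f y ≤ f (g y) + c
    have : f y ≤ f (g y) + c := by
      refine csSup_le (Set.range_nonempty _) ?_
      rintro t ⟨j, rfl⟩
      have h1 : T (g y) (j + 1) ≤ f (g y) := le_csSup (hbdd (g y)) ⟨j+1, rfl⟩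
      have h2 : G.dist (g y) (u (j+1)) = G.dist y (u j) := by
        rw [hdg (j+1)]
        norm_num
      have h3 : T (g y) (j+1) = (G.dist y (u j) : ℝ) - c * ((j+1).natAbs : ℝ) := by
        simp only [hT, h2]
      have h4 := hnatAbs2 j
      show (G.dist y (u j) : ℝ) - c * (j.natAbs : ℝ) ≤ f (g y) + c
      nlinarith
    linarith
  · -- f (g y) - f y ≤ c
    have : f (g y) ≤ f y + c := by
      refine csSup_le (Set.range_nonempty _) ?_
      rintro t ⟨i, rfl⟩
      have h1 : T y (i - 1) ≤ f y := le_csSup (hbdd y) ⟨i-1, rfl⟩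
      have h3 : T (g y) i = (G.dist y (u (i-1)) : ℝ) - c * (i.natAbs : ℝ) := by
        simp only [hT, hdg i]
      have h4 := hnatAbs i
      show T (g y) i ≤ f y + c
      rw [h3]
      have h5 : (G.dist y (u (i-1)) : ℝ) - c * ((i-1).natAbs : ℝ) ≤ f y := h1
      nlinarith
    linarith

/-! ### The key lemma: positivity of the stable translation length -/

lemma key {G : SimpleGraph V} (N : ℕ) (hHelly : IsHellyGraph G) (hdim : DimAtMost G N)
    {g : Equiv.Perm V} (hg : IsGraphAut G g) (x₀ : V)
    (hub : ∀ R : ℝ, ∃ n : ℤ, R < (G.dist x₀ ((g ^ n) x₀) : ℝ)) :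
    0 < sInf {t : ℝ | ∃ k : ℕ, 1 ≤ k ∧ t = (G.dist x₀ ((g ^ (k : ℤ)) x₀) : ℝ) / k} := by
  classical
  have hc : G.Connected := hHelly.1
  have hne : Nonempty V := ⟨x₀⟩
  set TS : Set ℝ := {t : ℝ | ∃ k : ℕ, 1 ≤ k ∧ t = (G.dist x₀ ((g ^ (k : ℤ)) x₀) : ℝ) / k}
    with hTS
  have hTne : TS.Nonempty := ⟨_, 1, le_refl 1, rfl⟩
  have hTbdd : BddBelow TS := by
    refine ⟨0, ?_⟩
    rintro t ⟨k, hk, rfl⟩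
    positivity
  by_contra hcon
  push_neg at hcon
  -- the small drift constant
  set c : ℝ := (8 * ((N:ℝ) + 2))⁻¹ with hcdef
  have hc0 : 0 < c := by positivity
  -- choose k₀ with d(x₀, g^k₀ x₀) < (c/2) k₀
  have h0 : sInf TS < c / 2 := lt_of_le_of_lt hcon (by positivity)
  obtain ⟨t, ht, htlt⟩ := (csInf_lt_iff hTbdd hTne).mp h0
  obtain ⟨k₀, hk₀1, rfl⟩ := ht
  have hk₀pos : (0:ℝ) < (k₀:ℝ) := by exact_mod_cast hk₀1
  have hak₀ : (G.dist x₀ ((g ^ (k₀ : ℤ)) x₀) : ℝ) < c / 2 * k₀ := by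
    rw [div_lt_iff₀ hk₀pos] at htlt
    linarith
  -- linear growth bound for all orbit distances
  set B : ℝ := ∑ r ∈ Finset.range k₀, (G.dist x₀ ((g ^ (r : ℤ)) x₀) : ℝ) with hB
  have hB0 : 0 ≤ B := Finset.sum_nonneg (fun r _ => by positivity)
  have hgrow : ∀ i : ℕ, (G.dist x₀ ((g ^ (i : ℤ)) x₀) : ℝ) ≤ c / 2 * i + B := by
    intro i
    induction i using Nat.strong_induction_on with
    | _ i IH =>
      rcases Nat.lt_or_ge i k₀ with hik | hik
      · have hmem : (G.dist x₀ ((g ^ (i : ℤ)) x₀) : ℝ) ≤ B := by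
          rw [hB]
          refine Finset.single_le_sum (s := Finset.range k₀)
            (f := fun r : ℕ => (G.dist x₀ ((g ^ (r : ℤ)) x₀) : ℝ))
            (fun r _ => by positivity) (Finset.mem_range.mpr hik)
        have : (0:ℝ) ≤ c / 2 * i := by positivity
        linarith
      · have hk₀pos' : 1 ≤ k₀ := hk₀1
        have hsub : G.dist x₀ ((g ^ (i : ℤ)) x₀)
            ≤ G.dist x₀ ((g ^ (k₀ : ℤ)) x₀) + G.dist x₀ ((g ^ ((i - k₀ : ℕ) : ℤ)) x₀) := by
          have := orbit_subadd hc hg (k₀ : ℤ) ((i - k₀ : ℕ) : ℤ) x₀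
          have hcast : (k₀ : ℤ) + ((i - k₀ : ℕ) : ℤ) = (i : ℤ) := by
            push_cast
            omega
          rwa [hcast] at this
        have hIH := IH (i - k₀) (by omega)
        have hcast2 : ((i - k₀ : ℕ) : ℝ) = (i : ℝ) - (k₀ : ℝ) := by
          push_cast [Nat.cast_sub hik]
          ring
        have hsubR : (G.dist x₀ ((g ^ (i : ℤ)) x₀) : ℝ)
            ≤ (G.dist x₀ ((g ^ (k₀ : ℤ)) x₀) : ℝ) + (G.dist x₀ ((g ^ ((i - k₀ : ℕ) : ℤ)) x₀) : ℝ) := by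
          exact_mod_cast hsub
        rw [hcast2] at hIH
        linarith
  -- the admissible function with drift ≤ c, and its extremalization
  obtain ⟨f, hfadm, hfdrift⟩ := exists_orbit_adm hc hg x₀ hc0 hB0 hgrow
  obtain ⟨p, hpadm, hpstar, hpdrift, hp0⟩ :=
    exists_extremal_drift hfadm (aut_dist hc hg) hfdrift
  -- the translated extremal functions q_j = p ∘ g^{-j}
  set q : ℤ → V → ℝ := fun j x => p ((g ^ (-j)) x) with hqdef
  have hmj : ∀ j : ℤ, ∀ a b : V, G.dist ((g ^ j) a) ((g ^ j) b) = G.dist a b :=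
    fun j => zpow_dist hc hg j
  have hqadm : ∀ j, Adm G (q j) := fun j => Adm_comp hpadm (hmj (-j))
  have hqstar : ∀ j x, starF G (q j) x = q j x := by
    intro j x
    have h1 := starF_comp hpadm (m := g ^ (-j)) (hmj (-j)) x
    have h2 := hpstar ((g ^ (-j)) x)
    exact h1.trans h2
  have hqnonneg : ∀ (j : ℤ) (x : V), 0 ≤ q j x := fun j x => hp0 _
  -- one-step comparison q_{j+1} vs q_j
  have hstep : ∀ (j : ℤ) (x : V), |q (j+1) x - q j x| ≤ c := by
    intro j x
    have hpow : (g ^ (-(j+1))) x = g⁻¹ ((g ^ (-j)) x) := by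
      have h1 : g ^ (-(j+1)) = g ^ ((-1) + (-j)) := by norm_num
      rw [h1, zpow_add, Equiv.Perm.mul_apply, zpow_neg_one]
    have h2 : q (j+1) x = p (g⁻¹ ((g ^ (-j)) x)) := by
      simp only [hqdef]
      rw [hpow]
    have h3 := hpdrift (g⁻¹ ((g ^ (-j)) x))
    simp only [show ∀ a, g (g⁻¹ a) = a from fun a => by simp] at h3
    rw [h2]
    show |p (g⁻¹ ((g ^ (-j)) x)) - p ((g ^ (-j)) x)| ≤ c
    rw [abs_sub_comm]
    exact h3
  -- telescoped: p x - j c ≤ q_j x for j : ℕ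
  have hqp : ∀ (j : ℕ) (x : V), p x - (j : ℝ) * c ≤ q (j : ℤ) x := by
    intro j
    induction j with
    | zero => intro x; simp [hqdef]; exact le_rfl
    | succ j ih =>
      intro x
      have h1 := hstep (j : ℤ) x
      have h2 := ih x
      have h3 := (abs_le.mp h1).1
      push_cast
      linarith
  -- integer radii
  set r : ℕ → V → ℕ := fun j x => (⌈q (j : ℤ) x⌉).toNat with hrdef
  have hr_cast : ∀ (j : ℕ) (x : V), ((r j x : ℕ) : ℝ) = ((⌈q (j : ℤ) x⌉ : ℤ) : ℝ) := by
    intro j x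
    have h1 : (0:ℤ) ≤ ⌈q (j : ℤ) x⌉ := Int.ceil_nonneg (hqnonneg _ x)
    simp only [hrdef]
    exact_mod_cast congrArg (fun z : ℤ => (z : ℝ)) (Int.toNat_of_nonneg h1)
  have hr_ge : ∀ (j : ℕ) (x : V), q (j : ℤ) x ≤ (r j x : ℝ) := by
    intro j x
    rw [hr_cast]
    exact Int.le_ceil _
  have hr_lt : ∀ (j : ℕ) (x : V), (r j x : ℝ) < q (j : ℤ) x + 1 := by
    intro j x
    rw [hr_cast]
    exact Int.ceil_lt_add_one _
  -- pairwise ball condition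
  have hsumc : ∀ i j : ℕ, i ≤ N+2 → j ≤ N+2 → ((i:ℝ) + (j:ℝ)) * c ≤ 1/4 := by
    intro i j hi hj
    have hiR : (i:ℝ) ≤ (N:ℝ) + 2 := by exact_mod_cast hi
    have hjR : (j:ℝ) ≤ (N:ℝ) + 2 := by exact_mod_cast hj
    have hNpos : (0:ℝ) < 8 * ((N:ℝ) + 2) := by positivity
    calc ((i:ℝ) + (j:ℝ)) * c ≤ (2 * ((N:ℝ) + 2)) * c :=
          mul_le_mul_of_nonneg_right (by linarith) (le_of_lt hc0)
      _ = (2 * ((N:ℝ) + 2)) * (8 * ((N:ℝ) + 2))⁻¹ := by rw [hcdef]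
      _ = 1/4 := by field_simp; ring
  have hpair : ∀ i j : ℕ, i ≤ N+2 → j ≤ N+2 → ∀ x y : V,
      G.dist x y ≤ r i x + r j y := by
    intro i j hi hj x y
    have h1 : (G.dist x y : ℝ) ≤ p x + p y := hpadm x y
    have h2 := hqp i x
    have h3 := hqp j y
    have h4 := hr_ge i x
    have h5 := hr_ge j y
    have h6 := hsumc i j hi hj
    have h7 : (G.dist x y : ℝ) < ((r i x : ℕ) : ℝ) + ((r j y : ℕ) : ℝ) + 1 := by
      nlinarith
    have h8 : G.dist x y < r i x + r j y + 1 := by exact_mod_cast h7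
    omega
  -- global Helly intersection
  set SS : Set (V × ℕ) := {pr | ∃ j ≤ N+2, ∃ x, pr = (x, r j x)} with hSS
  have hSpair : ∀ pr ∈ SS, ∀ qr ∈ SS,
      (ball G pr.1 pr.2 ∩ ball G qr.1 qr.2).Nonempty := by
    rintro pr ⟨i, hi, x, rfl⟩ qr ⟨j, hj, y, rfl⟩
    exact ball_inter_nonempty hc (hpair i j hi hj x y)
  obtain ⟨z, hz⟩ := hHelly.2 SS hSpair
  rw [mem_ballInter_iff] at hz
  have hzmem : ∀ j, j ≤ N+2 → ∀ x, G.dist x z ≤ r j x :=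
    fun j hj x => hz (x, r j x) ⟨j, hj, x, rfl⟩
  -- the round cliques σ_j
  set σ : ℕ → Set V := fun j => {w | ∀ x, G.dist x w ≤ r j x} with hσdef
  have hσball : ∀ (j : ℕ), σ j = ⋂ pr ∈ (Set.range fun x => (x, r j x) : Set (V × ℕ)),
      ball G pr.1 pr.2 := by
    intro j
    ext w
    rw [mem_ballInter_iff]
    constructor
    · rintro hw pr ⟨x, rfl⟩
      exact hw x
    · intro hw x
      exact hw (x, r j x) ⟨x, rfl⟩
  have hqle1 : ∀ (j : ℕ), ∀ w ∈ σ j, q (j:ℤ) w ≤ 1 := by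
    intro j w hw
    rw [← hqstar j w]
    refine starF_le (f := q (j:ℤ)) w (fun x => ?_)
    have h0 : G.dist w x = G.dist x w := SimpleGraph.dist_comm
    have h1 : (G.dist x w : ℝ) ≤ (r j x : ℝ) := by exact_mod_cast hw x
    have h2 := hr_lt j x
    rw [h0]
    linarith
  have hrle1 : ∀ (j : ℕ), ∀ w ∈ σ j, r j w ≤ 1 := by
    intro j w hw
    have h1 : ⌈q (j:ℤ) w⌉ ≤ 1 := by
      rw [show (1:ℤ) = ⌈(1:ℝ)⌉ by norm_num]
      exact Int.ceil_le_ceil (hqle1 j w hw)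
    simp only [hrdef]
    omega
  have hσclique : ∀ (j : ℕ), G.IsClique (σ j) := by
    intro j
    intro w hw w' hw' hne
    have h1 : G.dist w w' ≤ r j w := hw' w
    have h2 : r j w ≤ 1 := hrle1 j w hw
    have h3 : 0 < G.dist w w' := hc.pos_dist_of_ne hne
    have h4 : G.dist w w' = 1 := by omega
    exact SimpleGraph.dist_eq_one_iff_adj.mp h4
  -- the shift identity σ_{j+1} = g·σ_j (via membership)
  have hrshift : ∀ j : ℕ, ∀ x : V, r (j+1) (g x) = r j x := by
    intro j x
    have h1 : (g ^ (-((j:ℤ)+1))) (g x) = (g ^ (-(j:ℤ))) x := by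
      rw [← Equiv.Perm.mul_apply]
      congr 1
      have : g ^ (-((j:ℤ)+1)) * g = g ^ (-((j:ℤ)+1)) * g ^ (1:ℤ) := by
        norm_num
      rw [this, ← zpow_add]
      congr 1
      ring
    have h2 : q ((j:ℤ)+1) (g x) = q (j:ℤ) x := by
      simp only [hqdef]
      rw [h1]
    simp only [hrdef]
    have hcast : ((j+1 : ℕ) : ℤ) = (j:ℤ) + 1 := by push_cast; ring
    rw [hcast, h2]
  have hσshift : ∀ j : ℕ, ∀ w : V, w ∈ σ (j+1) ↔ g⁻¹ w ∈ σ j := by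
    intro j w
    constructor
    · intro hw x
      have h1 : G.dist x (g⁻¹ w) = G.dist (g x) w := by
        have := aut_dist hc hg x (g⁻¹ w)
        simpa using this.symm
      rw [h1, ← hrshift j x]
      exact hw (g x)
    · intro hw x
      have h1 : G.dist x w = G.dist (g⁻¹ x) (g⁻¹ w) := by
        have h := aut_dist hc hg (g⁻¹ x) (g⁻¹ w)
        simpa using h
      rw [h1]
      have h2 := hw (g⁻¹ x)
      have h3 : r j (g⁻¹ x) = r (j+1) x := by
        have h4 := hrshift j (g⁻¹ x)
        simpa using h4.symm
      rw [h3] at h2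
      exact h2
  -- the decreasing chain T_j and its stabilization
  set T : ℕ → Set V := fun j => ⋂ i ∈ Finset.range (j+1), σ i with hTdef
  have hmemT : ∀ (j : ℕ) (w : V), w ∈ T j ↔ ∀ i, i ≤ j → w ∈ σ i := by
    intro j w
    simp only [hTdef, Set.mem_iInter, Finset.mem_range]
    constructor
    · intro h i hi
      exact h i (by omega)
    · intro h i hi
      exact h i (by omega)
  have hTz : ∀ (j : ℕ), j ≤ N+2 → z ∈ T j := by
    intro j hj
    rw [hmemT]
    intro i hi x
    exact hzmem i (by omega) x
  have hTanti : ∀ a b : ℕ, a ≤ b → T b ⊆ T a := by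
    intro a b hab w hw
    rw [hmemT] at hw ⊢
    intro i hi
    exact hw i (by omega)
  have hTround : ∀ (j : ℕ), j ≤ N+2 → IsRoundClique G (T j) := by
    intro j hj
    refine ⟨⟨z, hTz j hj⟩, ?_, ?_⟩
    · have hsub : T j ⊆ σ 0 := fun w hw => (hmemT j w).mp hw 0 (by omega)
      exact (hσclique 0).subset hsub
    · refine ⟨{pr | ∃ i ≤ j, ∃ x, pr = (x, r i x)}, ?_⟩
      ext w
      rw [mem_ballInter_iff, hmemT]
      constructor
      · rintro hw pr ⟨i, hi, x, rfl⟩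
        exact hw i hi x
      · intro hw i hi x
        exact hw (x, r i x) ⟨i, hi, x, rfl⟩
  have hstab1 : ∃ J, J ≤ N+1 ∧ T (J+1) = T J := by
    by_contra hno
    push_neg at hno
    have hss : ∀ J, J ≤ N+1 → T (J+1) ⊂ T J := by
      intro J hJ
      exact HasSubset.Subset.ssubset_of_ne (hTanti J (J+1) (by omega)) (hno J hJ)
    have hchain : ∀ a b : ℕ, a < b → b ≤ N+2 → T b ⊂ T a := by
      intro a b hab hb
      exact  ssubset_of_subset_of_ssubset (hTanti (a+1) b (by omega)) (hss a (by omega))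
    have hCmono : StrictMono (fun i : Fin (N+2+1) => T (N+2 - (i:ℕ))) := by
      intro i j hij
      have h1 : (j:ℕ) ≤ N+2 := by omega
      have h2 : N+2 - (j:ℕ) < N+2 - (i:ℕ) := by omega
      have h3 := hchain (N+2 - (j:ℕ)) (N+2 - (i:ℕ)) h2 (by omega)
      exact h3
    have := hdim (N+2) (fun i : Fin (N+2+1) => T (N+2 - (i:ℕ)))
      (fun i => hTround _ (by omega)) hCmono
    omega
  obtain ⟨J, hJ, hTeq⟩ := hstab1
  set A : Set V := T J with hAdef
  have hAz : z ∈ A := hTz J (by omega)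
  have hAround : IsRoundClique G A := hTround J (by omega)
  have hAg : ∀ w ∈ A, g⁻¹ w ∈ A := by
    intro w hw
    have hw' : w ∈ T (J+1) := by rw [hTeq]; exact hw
    rw [hmemT] at hw' ⊢
    intro i hi
    exact (hσshift i w).mp (hw' (i+1) (by omega))
  have hAsub : A ⊆ g '' A := by
    intro w hw
    exact ⟨g⁻¹ w, hAg w hw, by simp⟩
  -- the increasing chain g^i A and its stabilization
  set Bf : ℕ → Set V := fun i => (⇑(g ^ (i:ℤ))) '' A with hBfdef
  have hBsucc : ∀ i : ℕ, Bf (i+1) = (⇑(g ^ (i:ℤ))) '' (g '' A) := by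
    intro i
    have h1 : (g ^ ((i+1 : ℕ) : ℤ)) = (g ^ (i:ℤ)) * g := by
      have : ((i+1 : ℕ) : ℤ) = (i:ℤ) + 1 := by push_cast; ring
      rw [this, zpow_add, zpow_one]
    simp only [hBfdef, h1]
    rw [Equiv.Perm.coe_mul, Set.image_comp]
  have hBmono : ∀ i : ℕ, Bf i ⊆ Bf (i+1) := by
    intro i
    rw [hBsucc i]
    exact Set.image_mono hAsub
  have hBmono' : ∀ a b : ℕ, a ≤ b → Bf a ⊆ Bf b := by
    intro a b hab
    induction b with
    | zero => have : a = 0 := by omega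
              subst this; exact subset_rfl
    | succ b ih =>
      rcases Nat.lt_or_ge a (b+1) with h | h
      · exact subset_trans (ih (by omega)) (hBmono b)
      · have : a = b+1 := by omega
        subst this; exact subset_rfl
  have hBround : ∀ i : ℕ, IsRoundClique G (Bf i) :=
    fun i => isRoundClique_image hc (isGraphAut_zpow hg (i:ℤ)) hAround
  have hstab2 : ∃ i, i ≤ N+1 ∧ Bf (i+1) = Bf i := by
    by_contra hno
    push_neg at hno
    have hss : ∀ i, i ≤ N+1 → Bf i ⊂ Bf (i+1) := by
      intro i hi
      exact HasSubset.Subset.ssubset_of_ne (hBmono i) (fun h => hno i hi h.symm)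
    have hCmono : StrictMono (fun i : Fin (N+2+1) => Bf (i:ℕ)) := by
      intro i j hij
      have h1 : (i:ℕ) < (j:ℕ) := hij
      exact ssubset_of_ssubset_of_subset (hss (i:ℕ) (by omega)) (hBmono' _ _ (by omega))
    have := hdim (N+2) (fun i : Fin (N+2+1) => Bf (i:ℕ)) (fun i => hBround _) hCmono
    omega
  obtain ⟨i₀, hi₀, hBeq⟩ := hstab2
  have hAeq : g '' A = A := by
    have h1 : (⇑(g ^ (i₀:ℤ))) '' (g '' A) = (⇑(g ^ (i₀:ℤ))) '' A := by
      rw [← hBsucc i₀, hBeq]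
    exact Set.image_injective.mpr (Equiv.injective _) h1
  -- A is g-invariant: orbits of its points have diameter ≤ 1
  have hInv : ∀ n : ℤ, ∀ w ∈ A, (g ^ n) w ∈ A := by
    intro n
    induction n using Int.induction_on with
    | zero => intro w hw; simpa using hw
    | succ k ih =>
      intro w hw
      have h1 : (g ^ ((k:ℤ)+1)) w = g ((g ^ (k:ℤ)) w) := by
        rw [show ((k:ℤ)+1) = 1 + (k:ℤ) by ring, zpow_add, zpow_one, Equiv.Perm.mul_apply]
      rw [h1]
      have h2 : (g ^ (k:ℤ)) w ∈ A := ih w hw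
      rw [← hAeq]
      exact ⟨_, h2, rfl⟩
    | pred k ih =>
      intro w hw
      have h1 : (g ^ (-(k:ℤ)-1)) w = g⁻¹ ((g ^ (-(k:ℤ))) w) := by
        rw [show (-(k:ℤ)-1) = (-1) + (-(k:ℤ)) by ring, zpow_add, Equiv.Perm.mul_apply,
          zpow_neg_one]
      rw [h1]
      exact hAg _ (ih w hw)
  have horb : ∀ n : ℤ, G.dist z ((g ^ n) z) ≤ 1 := by
    intro n
    have h1 : (g ^ n) z ∈ A := hInv n z hAz
    by_cases he : z = (g ^ n) z
    · rw [← he]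
      simp [SimpleGraph.dist_self]
    · have hadj : G.Adj z ((g ^ n) z) := hAround.2.1 hAz h1 he
      have := SimpleGraph.dist_le (SimpleGraph.Walk.cons hadj SimpleGraph.Walk.nil)
      simpa using this
  -- contradiction with unboundedness
  obtain ⟨n, hn⟩ := hub (2 * (G.dist x₀ z : ℝ) + 1)
  have hb : G.dist x₀ ((g ^ n) x₀) ≤ 2 * G.dist x₀ z + 1 := by
    have t1 : G.dist x₀ ((g ^ n) x₀) ≤ G.dist x₀ z + G.dist z ((g ^ n) x₀) :=
      hc.dist_triangle
    have t2 : G.dist z ((g ^ n) x₀) ≤ G.dist z ((g ^ n) z) + G.dist ((g ^ n) z) ((g ^ n) x₀) :=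
      hc.dist_triangle
    have t3 : G.dist ((g ^ n) z) ((g ^ n) x₀) = G.dist z x₀ := zpow_dist hc hg n z x₀
    have t4 : G.dist z x₀ = G.dist x₀ z := SimpleGraph.dist_comm
    have t5 := horb n
    omega
  have hbR : (G.dist x₀ ((g ^ n) x₀) : ℝ) ≤ 2 * (G.dist x₀ z : ℝ) + 1 := by
    exact_mod_cast hb
  linarith

/-- Classification of automorphisms of a Helly graph of finite combinatorial
dimension: every automorphism is elliptic (all orbits bounded) or hyperbolic
(every orbit map is a quasi-isometric embedding). -/
theorem stmt0 {V : Type*} (G : SimpleGraph V) (N : ℕ)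
    (hHelly : IsHellyGraph G) (hdim : DimAtMost G N)
    (g : Equiv.Perm V) (hg : IsGraphAut G g) :
    (∀ x : V, ∃ R : ℝ, ∀ n : ℤ, (G.dist x ((g ^ n) x) : ℝ) ≤ R) ∨
    (∀ x : V, ∃ lam C : ℝ, 1 ≤ lam ∧ 0 ≤ C ∧ ∀ m n : ℤ,
      lam⁻¹ * |(m : ℝ) - (n : ℝ)| - C ≤ (G.dist ((g ^ m) x) ((g ^ n) x) : ℝ) ∧
      (G.dist ((g ^ m) x) ((g ^ n) x) : ℝ) ≤ lam * |(m : ℝ) - (n : ℝ)| + C) := by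
  classical
  have hc : G.Connected := hHelly.1
  by_cases hell : ∀ x : V, ∃ R : ℝ, ∀ n : ℤ, (G.dist x ((g ^ n) x) : ℝ) ≤ R
  · exact Or.inl hell
  · right
    push_neg at hell
    obtain ⟨x₀, hx₀⟩ := hell
    set TS : Set ℝ := {t : ℝ | ∃ k : ℕ, 1 ≤ k ∧ t = (G.dist x₀ ((g ^ (k : ℤ)) x₀) : ℝ) / k}
      with hTS
    have hTbdd : BddBelow TS := by
      refine ⟨0, ?_⟩
      rintro t ⟨k, hk, rfl⟩
      positivity
    set τ : ℝ := sInf TS with hτdef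
    have hτpos : 0 < τ := key N hHelly hdim hg x₀ hx₀
    have hτle : ∀ k : ℕ, 1 ≤ k → τ * k ≤ (G.dist x₀ ((g ^ (k : ℤ)) x₀) : ℝ) := by
      intro k hk
      have hmem : ((G.dist x₀ ((g ^ (k : ℤ)) x₀) : ℝ) / k) ∈ TS := ⟨k, hk, rfl⟩
      have h1 : τ ≤ (G.dist x₀ ((g ^ (k : ℤ)) x₀) : ℝ) / k := csInf_le hTbdd hmem
      have hk0 : (0 : ℝ) < k := by exact_mod_cast hk
      calc τ * k ≤ ((G.dist x₀ ((g ^ (k : ℤ)) x₀) : ℝ) / k) * k :=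
            mul_le_mul_of_nonneg_right h1 (le_of_lt hk0)
        _ = (G.dist x₀ ((g ^ (k : ℤ)) x₀) : ℝ) := by field_simp
    intro x
    set D : ℝ := (G.dist x x₀ : ℝ) with hD
    have hD0 : 0 ≤ D := by positivity
    set a1 : ℝ := (G.dist x (g x) : ℝ) with ha1
    have ha10 : 0 ≤ a1 := by positivity
    refine ⟨max τ⁻¹ (a1 + 1), 2 * D + 1, le_trans (by linarith) (le_max_right _ _),
      by linarith, ?_⟩
    intro m n
    set k : ℕ := (n - m).natAbs with hkdef
    have hdx : G.dist ((g ^ m) x) ((g ^ n) x) = G.dist x ((g ^ (k : ℤ)) x) :=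
      orbit_dist_natAbs hc hg m n x
    have habs : |(m : ℝ) - (n : ℝ)| = (k : ℝ) := by
      rw [hkdef, Nat.cast_natAbs]
      push_cast
      rw [abs_sub_comm]
    have hlam1 : (1 : ℝ) ≤ max τ⁻¹ (a1 + 1) := le_trans (by linarith) (le_max_right _ _)
    have hlampos : (0 : ℝ) < max τ⁻¹ (a1 + 1) := by linarith
    have hinv : (max τ⁻¹ (a1 + 1))⁻¹ ≤ τ := by
      have h1 : τ⁻¹ ≤ max τ⁻¹ (a1 + 1) := le_max_left _ _
      have := one_div_le_one_div_of_le (by positivity : (0:ℝ) < τ⁻¹) h1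
      simpa [one_div, inv_inv] using this
    constructor
    · rw [hdx, habs]
      rcases Nat.eq_zero_or_pos k with hk0 | hk1
      · rw [hk0]
        simp only [Nat.cast_zero, mul_zero]
        have : (0:ℝ) ≤ (G.dist x ((g ^ ((k:ℕ) : ℤ)) x) : ℝ) := by positivity
        linarith
      · have htrans : (G.dist x₀ ((g ^ (k : ℤ)) x₀) : ℕ)
            ≤ G.dist x₀ x + G.dist x ((g ^ (k : ℤ)) x)
              + G.dist ((g ^ (k : ℤ)) x) ((g ^ (k : ℤ)) x₀) := by
          calc G.dist x₀ ((g ^ (k : ℤ)) x₀)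
              ≤ G.dist x₀ ((g ^ (k : ℤ)) x) + G.dist ((g ^ (k : ℤ)) x) ((g ^ (k : ℤ)) x₀) :=
                hc.dist_triangle
            _ ≤ (G.dist x₀ x + G.dist x ((g ^ (k : ℤ)) x))
                + G.dist ((g ^ (k : ℤ)) x) ((g ^ (k : ℤ)) x₀) := by
                have := hc.dist_triangle (u := x₀) (v := x) (w := (g ^ (k : ℤ)) x)
                omega
        have heq : G.dist ((g ^ (k : ℤ)) x) ((g ^ (k : ℤ)) x₀) = G.dist x x₀ :=
          zpow_dist hc hg _ x x₀
        have heq2 : G.dist x₀ x = G.dist x x₀ := SimpleGraph.dist_comm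
        rw [heq, heq2] at htrans
        have htransR : (G.dist x₀ ((g ^ (k : ℤ)) x₀) : ℝ)
            ≤ (G.dist x ((g ^ (k : ℤ)) x) : ℝ) + 2 * D := by
          rw [hD]
          have : ((G.dist x₀ ((g ^ (k : ℤ)) x₀) : ℕ) : ℝ)
              ≤ ((G.dist x x₀ + G.dist x ((g ^ (k : ℤ)) x) + G.dist x x₀ : ℕ) : ℝ) := by
            exact_mod_cast htrans
          push_cast at this
          linarith
        have hτk := hτle k hk1
        have hstep : (max τ⁻¹ (a1 + 1))⁻¹ * (k : ℝ) ≤ τ * k :=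
          mul_le_mul_of_nonneg_right hinv (by positivity)
        linarith
    · rw [hdx, habs]
      have hlin : (G.dist x ((g ^ (k : ℤ)) x) : ℝ) ≤ (k : ℝ) * a1 := by
        have := orbit_linear hc hg x k
        rw [ha1]
        exact_mod_cast this
      have h2 : (k : ℝ) * a1 ≤ (k : ℝ) * (a1 + 1) := by
        have : (0:ℝ) ≤ (k:ℝ) := by positivity
        nlinarith
      have h3 : (k : ℝ) * (a1 + 1) ≤ max τ⁻¹ (a1 + 1) * k := by
        rw [mul_comm]
        exact mul_le_mul_of_nonneg_right (le_max_right _ _) (by positivity)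
      linarith

end HellyPaper
end

section
/- Let G be a group of graph automorphisms of a Helly graph X. The following are equivalent: (1) G stabilizes a round clique of X (there is a round clique σ with g·σ = σ for all g ∈ G); (2) G fixes a point of the injective hull E(X) (there is f ∈ E(X) with g·f = f for all g ∈ G); (3) G has a bounded orbit in X (there are a vertex x and R ≥ 0 with d(x, g·x) ≤ R for all g ∈ G). -/
namespace HellyPaper

variable {V : Type*}

-- AUX (already tested)
lemma aut_dist_eq {G : SimpleGraph V} (hc : G.Connected) {g : Equiv.Perm V}
    (hg : IsGraphAut G g) (x y : V) :
    G.dist (g x) (g y) = G.dist x y := by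
  have key : ∀ (h : Equiv.Perm V), (∀ a b, G.Adj (h a) (h b) ↔ G.Adj a b) →
      ∀ a b, G.dist (h a) (h b) ≤ G.dist a b := by
    intro h hh a b
    obtain ⟨p, hp⟩ := hc.exists_walk_length_eq_dist a b
    let hom : G →g G := ⟨h, fun {u v} huv => (hh u v).mpr huv⟩
    calc G.dist (h a) (h b) = G.dist (hom a) (hom b) := by rfl
    _ ≤ (p.map hom).length := SimpleGraph.dist_le (p.map hom)
    _ = G.dist a b := by rw [SimpleGraph.Walk.length_map, hp]
  have hg' : ∀ a b, G.Adj (g⁻¹ a) (g⁻¹ b) ↔ G.Adj a b := by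
    intro a b
    rw [← hg (g⁻¹ a) (g⁻¹ b)]
    simp
  refine le_antisymm (key g hg x y) ?_
  have := key g⁻¹ hg' (g x) (g y)
  simpa using this

lemma walk_split {G : SimpleGraph V} (hc : G.Connected) {x y : V} (p : G.Walk x y) :
    ∀ (a b : ℕ), p.length ≤ a + b → ∃ z, G.dist x z ≤ a ∧ G.dist z y ≤ b := by
  induction p with
  | @nil u => exact fun a b _ => ⟨u, by rw [SimpleGraph.dist_self]; exact Nat.zero_le a,
      by rw [SimpleGraph.dist_self]; exact Nat.zero_le b⟩
  | @cons u w y h q ih =>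
    intro a b hlen
    cases a with
    | zero =>
      refine ⟨u, by rw [SimpleGraph.dist_self], ?_⟩
      calc G.dist u y ≤ (SimpleGraph.Walk.cons h q).length := SimpleGraph.dist_le _
      _ ≤ b := by simpa using hlen
    | succ a =>
      obtain ⟨z, hz1, hz2⟩ := ih a b (by
        have : q.length + 1 ≤ (a + 1) + b := by simpa [SimpleGraph.Walk.length_cons] using hlen
        omega)
      refine ⟨z, ?_, hz2⟩
      calc G.dist u z ≤ G.dist u w + G.dist w z := hc.dist_triangle
      _ ≤ 1 + a := add_le_add (le_of_eq (SimpleGraph.dist_eq_one_iff_adj.mpr h)) hz1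
      _ = a + 1 := by omega

lemma exists_middle {G : SimpleGraph V} (hc : G.Connected) {x y : V} {a b : ℕ}
    (h : G.dist x y ≤ a + b) :
    ∃ z, G.dist x z ≤ a ∧ G.dist z y ≤ b := by
  obtain ⟨p, hp⟩ := hc.exists_walk_length_eq_dist x y
  exact walk_split hc p a b (hp ▸ h)

lemma ciSup_reindex {ι : Type*} [Nonempty ι] (e : ι ≃ ι) (h : ι → ℝ)
    (hb : BddAbove (Set.range h)) : (⨆ i, h (e i)) = ⨆ i, h i := by
  apply le_antisymm
  · exact ciSup_le fun i => le_ciSup hb (e i)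
  · refine ciSup_le fun i => ?_
    have hb' : BddAbove (Set.range fun i => h (e i)) := by
      obtain ⟨c, hcb⟩ := hb
      exact ⟨c, by rintro t ⟨j, rfl⟩; exact hcb ⟨e j, rfl⟩⟩
    have := le_ciSup hb' (e.symm i)
    simpa using this

lemma myiSup_congr {ι α : Type*} [SupSet α] {f g : ι → α} (h : ∀ i, f i = g i) :
    iSup f = iSup g := by
  have : f = g := funext h
  rw [this]

-- the Isbell iteration
variable {Γ : Type*} [Group Γ]

noncomputable def seqF (G : SimpleGraph V) (φ : Γ →* Equiv.Perm V) (x₀ : V) : ℕ → V → ℝ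
  | 0 => fun v => ⨆ γ : Γ, (G.dist v (φ γ x₀) : ℝ)
  | (n+1) => fun v =>
      (seqF G φ x₀ n v + ⨆ y : V, ((G.dist v y : ℝ) - seqF G φ x₀ n y)) / 2

lemma imp32 (G : SimpleGraph V) (hc : G.Connected) (φ : Γ →* Equiv.Perm V)
    (hφ : ∀ γ : Γ, IsGraphAut G (φ γ))
    (h : ∃ (x : V) (R : ℝ), ∀ γ : Γ, (G.dist x (φ γ x) : ℝ) ≤ R) :
    ∃ f ∈ InjHull G, ∀ γ : Γ, hullAct (φ γ) f = f := by
  classical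
  obtain ⟨x₀, R, hR⟩ := h
  have hV : Nonempty V := ⟨x₀⟩
  set F : ℕ → V → ℝ := seqF G φ x₀ with hF
  -- boundedness of the base family
  have hbdd0 : ∀ v : V, BddAbove (Set.range fun γ : Γ => (G.dist v (φ γ x₀) : ℝ)) := by
    intro v
    refine ⟨(G.dist v x₀ : ℝ) + R, ?_⟩
    rintro t ⟨γ, rfl⟩
    have htri : G.dist v (φ γ x₀) ≤ G.dist v x₀ + G.dist x₀ (φ γ x₀) := hc.dist_triangle
    have : (G.dist v (φ γ x₀) : ℝ) ≤ (G.dist v x₀ : ℝ) + (G.dist x₀ (φ γ x₀) : ℝ) := by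
      exact_mod_cast htri
    linarith [hR γ]
  have hF0 : ∀ v, (G.dist v x₀ : ℝ) ≤ F 0 v := by
    intro v
    have := le_ciSup (hbdd0 v) (1 : Γ)
    simpa [hF, seqF] using this
  -- main induction: admissibility and invariance
  have hkey : ∀ n, (∀ v w, (G.dist v w : ℝ) ≤ F n v + F n w) ∧
      (∀ (γ : Γ) v, F n (φ γ v) = F n v) := by
    intro n
    induction n with
    | zero =>
      constructor
      · intro v w
        have h1 := hF0 v
        have h2 := hF0 w
        have htri : (G.dist v w : ℝ) ≤ (G.dist v x₀ : ℝ) + (G.dist w x₀ : ℝ) := by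
          have : G.dist v w ≤ G.dist v x₀ + G.dist x₀ w := hc.dist_triangle
          have h3 : G.dist x₀ w = G.dist w x₀ := SimpleGraph.dist_comm
          rw [h3] at this
          exact_mod_cast this
        linarith
      · intro γ v
        show (⨆ δ : Γ, (G.dist (φ γ v) (φ δ x₀) : ℝ)) = ⨆ δ : Γ, (G.dist v (φ δ x₀) : ℝ)
        have hterm : ∀ δ : Γ, (G.dist (φ γ v) (φ (γ * δ) x₀) : ℝ) = G.dist v (φ δ x₀) := by
          intro δ
          have := aut_dist_eq hc (hφ γ) v (φ δ x₀)
          rw [map_mul]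
          simp only [Equiv.Perm.mul_apply]
          exact_mod_cast this
        calc (⨆ δ : Γ, (G.dist (φ γ v) (φ δ x₀) : ℝ))
            = ⨆ δ : Γ, (G.dist (φ γ v) (φ ((Equiv.mulLeft γ) δ) x₀) : ℝ) :=
              (ciSup_reindex (Equiv.mulLeft γ) _ (hbdd0 (φ γ v))).symm
        _ = ⨆ δ : Γ, (G.dist v (φ δ x₀) : ℝ) := by
              refine myiSup_congr fun δ => ?_
              simpa [Equiv.coe_mulLeft] using hterm δ
    | succ n ih =>
      obtain ⟨hadm, hinv⟩ := ih
      have hbddS : ∀ v : V, BddAbove (Set.range fun y => (G.dist v y : ℝ) - F n y) := by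
        intro v
        refine ⟨F n v, ?_⟩
        rintro t ⟨y, rfl⟩
        have := hadm v y
        simp only
        linarith
      have hstep : ∀ v, F (n+1) v =
          (F n v + ⨆ y : V, ((G.dist v y : ℝ) - F n y)) / 2 := fun v => rfl
      constructor
      · intro v w
        have hSv : (G.dist v w : ℝ) - F n w ≤ ⨆ y : V, ((G.dist v y : ℝ) - F n y) :=
          le_ciSup (hbddS v) w
        have hSw : (G.dist v w : ℝ) - F n v ≤ ⨆ y : V, ((G.dist w y : ℝ) - F n y) := by
          have := le_ciSup (hbddS w) v
          have hcomm : G.dist w v = G.dist v w := SimpleGraph.dist_comm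
          rw [hcomm] at this
          exact this
        rw [hstep v, hstep w]
        linarith
      · intro γ v
        have hSinv : (⨆ y : V, ((G.dist (φ γ v) y : ℝ) - F n y))
            = ⨆ y : V, ((G.dist v y : ℝ) - F n y) := by
          have hterm : ∀ y : V, (G.dist (φ γ v) (φ γ y) : ℝ) - F n (φ γ y)
              = (G.dist v y : ℝ) - F n y := by
            intro y
            have h1 := aut_dist_eq hc (hφ γ) v y
            rw [hinv γ y]
            congr 1
            exact_mod_cast h1
          calc (⨆ y : V, ((G.dist (φ γ v) y : ℝ) - F n y))
              = ⨆ y : V, ((G.dist (φ γ v) ((φ γ : Equiv.Perm V) y) : ℝ) - F n ((φ γ : Equiv.Perm V) y)) :=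
                (ciSup_reindex (φ γ : Equiv.Perm V) _ (hbddS (φ γ v))).symm
          _ = ⨆ y : V, ((G.dist v y : ℝ) - F n y) := myiSup_congr hterm
        rw [hstep (φ γ v), hstep v, hinv γ v, hSinv]
  have hadm : ∀ n v w, (G.dist v w : ℝ) ≤ F n v + F n w := fun n => (hkey n).1
  have hinv : ∀ n (γ : Γ) v, F n (φ γ v) = F n v := fun n => (hkey n).2
  have hnonneg : ∀ n v, 0 ≤ F n v := by
    intro n v
    have := hadm n v v
    rw [SimpleGraph.dist_self] at this
    push_cast at this
    linarith
  have hbddS : ∀ n (v : V), BddAbove (Set.range fun y => (G.dist v y : ℝ) - F n y) := by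
    intro n v
    refine ⟨F n v, ?_⟩
    rintro t ⟨y, rfl⟩
    have := hadm n v y
    simp only
    linarith
  have hstep : ∀ n v, F (n+1) v =
      (F n v + ⨆ y : V, ((G.dist v y : ℝ) - F n y)) / 2 := fun n v => rfl
  have hanti : ∀ v, Antitone fun n => F n v := by
    intro v
    apply antitone_nat_of_succ_le
    intro n
    have hS : (⨆ y : V, ((G.dist v y : ℝ) - F n y)) ≤ F n v := by
      refine ciSup_le fun y => ?_
      have := hadm n v y
      linarith
    rw [hstep n v]
    linarith
  have hbddB : ∀ v, BddBelow (Set.range fun n => F n v) := by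
    intro v
    exact ⟨0, by rintro t ⟨n, rfl⟩; exact hnonneg n v⟩
  set f : V → ℝ := fun v => ⨅ n, F n v with hfdef
  have hfle : ∀ n v, f v ≤ F n v := fun n v => ciInf_le (hbddB v) n
  have htend : ∀ v, Filter.Tendsto (fun n => F n v) Filter.atTop (nhds (f v)) :=
    fun v => tendsto_atTop_ciInf (hanti v) (hbddB v)
  have hfadm : ∀ v w, (G.dist v w : ℝ) ≤ f v + f w := by
    intro v w
    have := (htend v).add (htend w)
    exact ge_of_tendsto this (Filter.Eventually.of_forall fun n => hadm n v w)
  have hfinv : ∀ (γ : Γ) v, f (φ γ v) = f v := by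
    intro γ v
    exact iInf_congr fun n => hinv n γ v
  refine ⟨f, ⟨hfadm, ?_⟩, ?_⟩
  · -- extremality
    intro v
    constructor
    · rintro t ⟨y, rfl⟩
      have := hfadm v y
      simp only
      linarith
    · intro b hb
      have hble : ∀ n, (⨆ y : V, ((G.dist v y : ℝ) - F n y)) ≤ b := by
        intro n
        refine ciSup_le fun y => ?_
        have h1 : (G.dist v y : ℝ) - f y ≤ b := hb ⟨y, rfl⟩
        have h2 := hfle n y
        linarith
      have hSn : ∀ n, (⨆ y : V, ((G.dist v y : ℝ) - F n y)) = 2 * F (n+1) v - F n v := by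
        intro n
        rw [hstep n v]
        ring
      have htend2 : Filter.Tendsto (fun n => 2 * F (n+1) v - F n v) Filter.atTop
          (nhds (2 * f v - f v)) := by
        apply Filter.Tendsto.sub
        · exact (Filter.Tendsto.const_mul 2 ((htend v).comp (Filter.tendsto_add_atTop_nat 1)))
        · exact htend v
      have : 2 * f v - f v ≤ b := by
        refine le_of_tendsto htend2 (Filter.Eventually.of_forall fun n => ?_)
        rw [← hSn n]
        exact hble n
      linarith
  · -- invariance
    intro γ
    funext x
    show f ((φ γ)⁻¹ x) = f x
    have : ((φ γ)⁻¹ : Equiv.Perm V) x = (φ γ⁻¹ : Equiv.Perm V) x := by rw [map_inv]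
    rw [this]
    exact hfinv γ⁻¹ x


lemma imp13 (G : SimpleGraph V) (hc : G.Connected) (φ : Γ →* Equiv.Perm V)
    (h : ∃ σ : Set V, IsRoundClique G σ ∧ ∀ γ : Γ, (φ γ) '' σ = σ) :
    ∃ (x : V) (R : ℝ), ∀ γ : Γ, (G.dist x (φ γ x) : ℝ) ≤ R := by
  obtain ⟨σ, ⟨⟨x, hx⟩, hclique, -⟩, hinv⟩ := h
  refine ⟨x, 1, fun γ => ?_⟩
  have hmem : (φ γ : Equiv.Perm V) x ∈ σ := by
    rw [← hinv γ]; exact ⟨x, hx, rfl⟩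
  by_cases hxy : x = (φ γ : Equiv.Perm V) x
  · rw [← hxy, SimpleGraph.dist_self]; norm_num
  · have hadj : G.Adj x ((φ γ : Equiv.Perm V) x) := hclique hx hmem hxy
    have : G.dist x ((φ γ : Equiv.Perm V) x) = 1 := SimpleGraph.dist_eq_one_iff_adj.mpr hadj
    rw [this]; norm_num

lemma imp23 (G : SimpleGraph V) (hc : G.Connected) (φ : Γ →* Equiv.Perm V)
    (h : ∃ f ∈ InjHull G, ∀ γ : Γ, hullAct (φ γ) f = f) :
    ∃ (x : V) (R : ℝ), ∀ γ : Γ, (G.dist x (φ γ x) : ℝ) ≤ R := by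
  obtain ⟨f, ⟨hadm, -⟩, hfix⟩ := h
  obtain ⟨x⟩ := hc.nonempty
  refine ⟨x, 2 * f x, fun γ => ?_⟩
  have hval : f ((φ γ : Equiv.Perm V) x) = f x := by
    have := congrFun (hfix γ) ((φ γ : Equiv.Perm V) x)
    simpa [hullAct] using this.symm
  calc (G.dist x ((φ γ : Equiv.Perm V) x) : ℝ) ≤ f x + f ((φ γ : Equiv.Perm V) x) := hadm _ _
  _ = 2 * f x := by rw [hval]; ring

lemma imp21 (G : SimpleGraph V) (hH : IsHellyGraph G) (φ : Γ →* Equiv.Perm V)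
    (hφ : ∀ γ : Γ, IsGraphAut G (φ γ))
    (h : ∃ f ∈ InjHull G, ∀ γ : Γ, hullAct (φ γ) f = f) :
    ∃ σ : Set V, IsRoundClique G σ ∧ ∀ γ : Γ, (φ γ) '' σ = σ := by
  obtain ⟨f, ⟨hadm, hlub⟩, hfix⟩ := h
  have hc := hH.1
  have hf0 : ∀ x, 0 ≤ f x := by
    intro x
    have := hadm x x
    rw [SimpleGraph.dist_self] at this
    push_cast at this
    linarith
  set σ : Set V := {z | ∀ x : V, G.dist x z ≤ ⌈f x⌉₊} with hσdef
  set S : Set (V × ℕ) := Set.range (fun x => (x, ⌈f x⌉₊)) with hSdef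
  have hσeq : σ = ⋂ p ∈ S, ball G p.1 p.2 := by
    ext z
    simp only [hσdef, Set.mem_setOf_eq, Set.mem_iInter, hSdef, Set.mem_range, ball]
    constructor
    · rintro hz p ⟨x, rfl⟩
      exact hz x
    · intro hz x
      exact hz (x, ⌈f x⌉₊) ⟨x, rfl⟩
  have hne : σ.Nonempty := by
    rw [hσeq]
    apply hH.2
    rintro p ⟨x, rfl⟩ q ⟨y, rfl⟩
    have hxy : G.dist x y ≤ ⌈f x⌉₊ + ⌈f y⌉₊ := by
      have h1 : (G.dist x y : ℝ) ≤ f x + f y := hadm x y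
      have h2 : f x + f y ≤ (⌈f x⌉₊ : ℝ) + (⌈f y⌉₊ : ℝ) :=
        add_le_add (Nat.le_ceil _) (Nat.le_ceil _)
      exact_mod_cast h1.trans h2
    obtain ⟨z, hz1, hz2⟩ := exists_middle hc hxy
    refine ⟨z, hz1, ?_⟩
    show G.dist y z ≤ ⌈f y⌉₊
    rwa [SimpleGraph.dist_comm]
  have hclique : G.IsClique σ := by
    intro z hz w hw hzw
    have hfw1 : f w ≤ 1 := by
      refine (hlub w).2 ?_
      rintro t ⟨y, rfl⟩
      have h1 : G.dist y w ≤ ⌈f y⌉₊ := hw y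
      have h2 : (G.dist w y : ℝ) ≤ (⌈f y⌉₊ : ℝ) := by
        rw [SimpleGraph.dist_comm]
        exact_mod_cast h1
      have h3 : (⌈f y⌉₊ : ℝ) < f y + 1 := Nat.ceil_lt_add_one (hf0 y)
      simp only
      linarith
    have hd1 : G.dist w z ≤ 1 := by
      have := hz w
      have hce : ⌈f w⌉₊ ≤ 1 := Nat.ceil_le.mpr (by exact_mod_cast hfw1)
      omega
    have hdne : G.dist w z ≠ 0 :=
      fun h0 => hzw ((hc.dist_eq_zero_iff.mp h0).symm)
    have : G.dist w z = 1 := by omega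
    exact (SimpleGraph.dist_eq_one_iff_adj.mp this).symm
  have hmem_act : ∀ (γ : Γ) z, z ∈ σ → (φ γ : Equiv.Perm V) z ∈ σ := by
    intro γ z hzσ x
    have hfx : f (((φ γ)⁻¹ : Equiv.Perm V) x) = f x := congrFun (hfix γ) x
    have hdist : G.dist x ((φ γ : Equiv.Perm V) z)
        = G.dist (((φ γ)⁻¹ : Equiv.Perm V) x) z := by
      have := aut_dist_eq hc (hφ γ) (((φ γ)⁻¹ : Equiv.Perm V) x) z
      rw [← this]
      congr 1
      exact (Equiv.apply_symm_apply _ _).symm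
    rw [hdist, ← hfx]
    exact hzσ _
  refine ⟨σ, ⟨hne, hclique, ⟨S, hσeq⟩⟩, fun γ => ?_⟩
  apply Set.eq_of_subset_of_subset
  · rintro _ ⟨z, hz, rfl⟩
    exact hmem_act γ z hz
  · intro z hz
    refine ⟨((φ γ)⁻¹ : Equiv.Perm V) z, ?_, Equiv.apply_symm_apply _ _⟩
    have := hmem_act γ⁻¹ z hz
    have heq : (φ γ⁻¹ : Equiv.Perm V) z = ((φ γ)⁻¹ : Equiv.Perm V) z := by rw [map_inv]
    rwa [heq] at this


end HellyPaper

namespace HellyPaper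
/-- Characterizations of elliptic groups of automorphisms of a Helly graph:
stabilizing a round clique ↔ fixing a point of the injective hull ↔ having a
bounded orbit. -/
theorem stmt2 {V : Type*} {Γ : Type*} [Group Γ] (G : SimpleGraph V)
    (hHelly : IsHellyGraph G) (φ : Γ →* Equiv.Perm V)
    (hφ : ∀ γ : Γ, IsGraphAut G (φ γ)) :
    ((∃ σ : Set V, IsRoundClique G σ ∧ ∀ γ : Γ, (φ γ) '' σ = σ) ↔
      (∃ f ∈ InjHull G, ∀ γ : Γ, hullAct (φ γ) f = f)) ∧
    ((∃ f ∈ InjHull G, ∀ γ : Γ, hullAct (φ γ) f = f) ↔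
      (∃ (x : V) (R : ℝ), ∀ γ : Γ, (G.dist x (φ γ x) : ℝ) ≤ R)) := by
  refine ⟨⟨fun h1 => imp32 G hHelly.1 φ hφ (imp13 G hHelly.1 φ h1), imp21 G hHelly φ hφ⟩,
    imp23 G hHelly.1 φ, imp32 G hHelly.1 φ hφ⟩

end HellyPaper
end

section
/- Let X be a Helly graph and let A ⊆ X be a round clique with at least two vertices. Define f_A : X → ℝ by: f_A(x) = 1/2 if x ∈ A; and for x ∉ A, letting D = min_{a∈A} d(x,a), set f_A(x) = D if A ⊆ B(x,D) and f_A(x) = D + 1/2 otherwise. Then f_A belongs to the injective hull E(X), i.e. f_A(x)+f_A(y) ≥ d(x,y) for all x,y ∈ X and f_A(x) = sup_{y∈X}(d(x,y) − f_A(y)) for all x ∈ X. -/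
namespace HellyPaper
lemma mem_ball_iff {G : SimpleGraph V} {x y : V} {r : ℕ} :
    y ∈ ball G x r ↔ G.dist x y ≤ r := Iff.rfl

lemma walk_mid (G : SimpleGraph V) (hconn : G.Connected) :
    ∀ {u v : V} (p : G.Walk u v) (k : ℕ),
      ∃ w : V, G.dist u w ≤ k ∧ G.dist w v ≤ p.length - k := by
  intro u v p
  induction p with
  | @nil u =>
    intro k
    exact ⟨u, by simp [SimpleGraph.dist_self], by simp [SimpleGraph.dist_self]⟩
  | @cons u b v h q ih =>
    intro k
    cases k with
    | zero =>
      refine ⟨u, by simp [SimpleGraph.dist_self], ?_⟩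
      simpa using G.dist_le (SimpleGraph.Walk.cons h q)
    | succ k' =>
      obtain ⟨w, hw1, hw2⟩ := ih k'
      refine ⟨w, ?_, ?_⟩
      · have h1 : G.dist u b = 1 := SimpleGraph.dist_eq_one_iff_adj.mpr h
        have := hconn.dist_triangle (u := u) (v := b) (w := w)
        omega
      · have hlen : (SimpleGraph.Walk.cons h q).length = q.length + 1 := by simp
        omega

lemma exists_mid (G : SimpleGraph V) (hconn : G.Connected) (u v : V) (k : ℕ) :
    ∃ w : V, G.dist u w ≤ k ∧ G.dist w v ≤ G.dist u v - k := by
  obtain ⟨p, hp⟩ := hconn.exists_walk_length_eq_dist u v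
  obtain ⟨w, h1, h2⟩ := walk_mid G hconn p k
  exact ⟨w, h1, by omega⟩

/-- For a round clique A with at least two vertices, the function f_A (equal to
1/2 on A, and to D or D+1/2 off A according to whether A ⊆ B(x,D), where D is
the minimal distance from x to A) belongs to the injective hull E(X). -/
theorem stmt5 {V : Type*} (G : SimpleGraph V) (hHelly : IsHellyGraph G)
    (A : Set V) (hA : IsRoundClique G A)
    (hA2 : ∃ a ∈ A, ∃ b ∈ A, a ≠ b)
    (f : V → ℝ)
    (hf1 : ∀ x ∈ A, f x = 1 / 2)
    (hf2 : ∀ x ∉ A, ∀ D : ℕ, IsLeast ((fun a => G.dist x a) '' A) D →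
      (A ⊆ ball G x D → f x = (D : ℝ)) ∧
      (¬ A ⊆ ball G x D → f x = (D : ℝ) + 1 / 2)) :
    f ∈ InjHull G := by
  obtain ⟨hconn, hHellyP⟩ := hHelly
  obtain ⟨hAne, hclique, S, hSA⟩ := hA
  set D : V → ℕ := fun x => sInf ((fun a => G.dist x a) '' A) with hDdef
  have hDleast : ∀ x : V, IsLeast ((fun a => G.dist x a) '' A) (D x) := fun x =>
    ⟨Nat.sInf_mem (hAne.image _), fun n hn => Nat.sInf_le hn⟩
  have hDmem : ∀ x : V, ∃ a ∈ A, G.dist x a = D x := by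
    intro x
    obtain ⟨a, ha, hd⟩ := (hDleast x).1
    exact ⟨a, ha, hd⟩
  have hDlb : ∀ x : V, ∀ a ∈ A, D x ≤ G.dist x a := fun x a ha =>
    (hDleast x).2 ⟨a, ha, rfl⟩
  have hcl1 : ∀ a ∈ A, ∀ b ∈ A, G.dist a b ≤ 1 := by
    intro a ha b hb
    by_cases hab : a = b
    · subst hab; simp [SimpleGraph.dist_self]
    · exact le_of_eq (SimpleGraph.dist_eq_one_iff_adj.mpr (hclique ha hb hab))
  have hDub : ∀ x : V, ∀ a ∈ A, G.dist x a ≤ D x + 1 := by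
    intro x a ha
    obtain ⟨a0, ha0, hd0⟩ := hDmem x
    have h1 : G.dist x a ≤ G.dist x a0 + G.dist a0 a := hconn.dist_triangle
    have h2 := hcl1 a0 ha0 a ha
    omega
  have hDzero : ∀ x ∈ A, D x = 0 := by
    intro x hx
    have h1 := hDlb x x hx
    have h2 : G.dist x x = 0 := SimpleGraph.dist_self
    omega
  have hnotsub : ∀ x ∈ A, ¬ A ⊆ ball G x (D x) := by
    intro x hx hsub
    obtain ⟨a, ha, b, hb, hab⟩ := hA2
    have hda : G.dist x a ≤ D x := hsub ha
    have hdb : G.dist x b ≤ D x := hsub hb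
    rw [hDzero x hx] at hda hdb
    have h1 : x = a := hconn.dist_eq_zero_iff.mp (Nat.le_zero.mp hda)
    have h2 : x = b := hconn.dist_eq_zero_iff.mp (Nat.le_zero.mp hdb)
    exact hab (h1 ▸ h2)
  have hval1 : ∀ x : V, A ⊆ ball G x (D x) → f x = (D x : ℝ) := by
    intro x hsub
    have hxA : x ∉ A := fun h => hnotsub x h hsub
    exact (hf2 x hxA (D x) (hDleast x)).1 hsub
  have hval2 : ∀ x : V, ¬ A ⊆ ball G x (D x) → f x = (D x : ℝ) + 1 / 2 := by
    intro x hsub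
    by_cases hxA : x ∈ A
    · rw [hf1 x hxA, hDzero x hxA]; norm_num
    · exact (hf2 x hxA (D x) (hDleast x)).2 hsub
  have hflb : ∀ x : V, (D x : ℝ) ≤ f x := by
    intro x
    by_cases hsub : A ⊆ ball G x (D x)
    · rw [hval1 x hsub]
    · rw [hval2 x hsub]; linarith
  -- Part (i): the distance inequality
  have hI : ∀ x y : V, (G.dist x y : ℝ) ≤ f x + f y := by
    intro x y
    by_cases hx : A ⊆ ball G x (D x)
    · obtain ⟨b, hb, hbd⟩ := hDmem y
      have h1 : G.dist x b ≤ D x := hx hb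
      have h2 : G.dist x y ≤ G.dist x b + G.dist b y := hconn.dist_triangle
      have h3 : G.dist b y = G.dist y b := SimpleGraph.dist_comm
      have h4 : G.dist x y ≤ D x + D y := by omega
      have h5 := hflb x
      have h6 := hflb y
      have h7 : (G.dist x y : ℝ) ≤ (D x : ℝ) + (D y : ℝ) := by exact_mod_cast h4
      linarith
    · by_cases hy : A ⊆ ball G y (D y)
      · obtain ⟨a, ha, had⟩ := hDmem x
        have h1 : G.dist y a ≤ D y := hy ha
        have h2 : G.dist x y ≤ G.dist x a + G.dist a y := hconn.dist_triangle
        have h3 : G.dist a y = G.dist y a := SimpleGraph.dist_comm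
        have h4 : G.dist x y ≤ D x + D y := by omega
        have h5 := hflb x
        have h6 := hflb y
        have h7 : (G.dist x y : ℝ) ≤ (D x : ℝ) + (D y : ℝ) := by exact_mod_cast h4
        linarith
      · obtain ⟨a, ha, had⟩ := hDmem x
        obtain ⟨b, hb, hbd⟩ := hDmem y
        have h1 : G.dist x y ≤ G.dist x a + G.dist a y := hconn.dist_triangle
        have h2 : G.dist a y ≤ G.dist a b + G.dist b y := hconn.dist_triangle
        have h3 : G.dist a b ≤ 1 := hcl1 a ha b hb
        have h4 : G.dist b y = G.dist y b := SimpleGraph.dist_comm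
        have h5 : G.dist x y ≤ D x + D y + 1 := by omega
        rw [hval2 x hx, hval2 y hy]
        have h6 : (G.dist x y : ℝ) ≤ (D x : ℝ) + (D y : ℝ) + 1 := by exact_mod_cast h5
        linarith
  -- Part (ii): attainment of the supremum
  have hAtt : ∀ x : V, ∃ y : V, (G.dist x y : ℝ) = f x + f y := by
    intro x
    by_cases hx : A ⊆ ball G x (D x)
    · -- hard case: A ⊆ B(x, D x), use the Helly property
      have hxA : x ∉ A := fun h => hnotsub x h hx
      have hD1 : 1 ≤ D x := by
        obtain ⟨a0, ha0, hd0⟩ := hDmem x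
        by_contra h0
        push_neg at h0
        have hx0 : G.dist x a0 = 0 := by omega
        have : x = a0 := hconn.dist_eq_zero_iff.mp hx0
        exact hxA (this ▸ ha0)
      -- Step 1: find a ball B(z,r) ⊇ A with d(z,x) ≥ r + D x
      have hzr : ∃ z : V, ∃ r : ℕ, A ⊆ ball G z r ∧ r + D x ≤ G.dist z x := by
        have key : ∃ p ∈ S, ball G p.1 p.2 ∩ ball G x (D x - 1) = ∅ := by
          by_contra hcon
          push_neg at hcon
          have hpair : ∀ p ∈ insert (x, D x - 1) S, ∀ q ∈ insert (x, D x - 1) S,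
              (ball G p.1 p.2 ∩ ball G q.1 q.2).Nonempty := by
            intro p hp q hq
            obtain ⟨a0, ha0⟩ := hAne
            rcases Set.mem_insert_iff.mp hp with rfl | hp2 <;>
              rcases Set.mem_insert_iff.mp hq with rfl | hq2
            · exact ⟨x, mem_ball_iff.mpr (by simp [SimpleGraph.dist_self]),
                mem_ball_iff.mpr (by simp [SimpleGraph.dist_self])⟩
            · obtain ⟨w, hw1, hw2⟩ := hcon q hq2
              exact ⟨w, hw2, hw1⟩
            · obtain ⟨w, hw1, hw2⟩ := hcon p hp2
              exact ⟨w, hw1, hw2⟩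
            · have hap : a0 ∈ ball G p.1 p.2 := by
                rw [hSA] at ha0
                exact Set.mem_iInter₂.mp ha0 p hp2
              have haq : a0 ∈ ball G q.1 q.2 := by
                rw [hSA] at ha0
                exact Set.mem_iInter₂.mp ha0 q hq2
              exact ⟨a0, hap, haq⟩
          obtain ⟨w, hw⟩ := hHellyP (insert (x, D x - 1) S) hpair
          have hwx : G.dist x w ≤ D x - 1 :=
            Set.mem_iInter₂.mp hw (x, D x - 1) (Set.mem_insert _ _)
          have hwA : w ∈ A := by
            rw [hSA]
            exact Set.mem_iInter₂.mpr fun p hp =>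
              Set.mem_iInter₂.mp hw p (Set.mem_insert_of_mem _ hp)
          have := hDlb x w hwA
          omega
        obtain ⟨⟨z, r⟩, hzS, hdisj⟩ := key
        refine ⟨z, r, ?_, ?_⟩
        · intro a ha
          rw [hSA] at ha
          exact Set.mem_iInter₂.mp ha (z, r) hzS
        · by_contra hlt
          push_neg at hlt
          obtain ⟨w, hw1, hw2⟩ := exists_mid G hconn z x (min r (G.dist z x))
          have hwz : G.dist z w ≤ r := le_trans hw1 (min_le_left _ _)
          have hwx : G.dist x w ≤ D x - 1 := by
            rw [SimpleGraph.dist_comm]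
            rcases min_cases r (G.dist z x) with ⟨he, hle⟩ | ⟨he, hle⟩ <;> omega
          exact Set.eq_empty_iff_forall_notMem.mp hdisj w
            ⟨mem_ball_iff.mpr hwz, mem_ball_iff.mpr hwx⟩
      obtain ⟨z, r, hAz, hzx⟩ := hzr
      have hr1 : 1 ≤ r := by
        obtain ⟨a, ha, b, hb, hab⟩ := hA2
        by_contra h0
        push_neg at h0
        have h1 : G.dist z a ≤ r := hAz ha
        have h2 : G.dist z b ≤ r := hAz hb
        have h3 : z = a := hconn.dist_eq_zero_iff.mp (by omega)
        have h4 : z = b := hconn.dist_eq_zero_iff.mp (by omega)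
        exact hab (h3 ▸ h4)
      obtain ⟨R, hRx⟩ : ∃ R : ℕ, G.dist z x = R + (D x + 1) :=
        ⟨G.dist z x - (D x + 1), by omega⟩
      -- Step 2: apply the Helly property to find y
      have hxz : ∃ w : V, w ∈ ball G z R ∩ ball G x (D x + 1) := by
        obtain ⟨w, hw1, hw2⟩ := exists_mid G hconn z x R
        refine ⟨w, mem_ball_iff.mpr hw1, mem_ball_iff.mpr ?_⟩
        rw [SimpleGraph.dist_comm]
        omega
      have haz : ∀ a ∈ A, (ball G z R ∩ ball G a 1).Nonempty := by
        intro a ha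
        have hza : G.dist z a ≤ r := hAz ha
        obtain ⟨w, hw1, hw2⟩ := exists_mid G hconn z a (min R (G.dist z a))
        refine ⟨w, mem_ball_iff.mpr (le_trans hw1 (min_le_left _ _)), mem_ball_iff.mpr ?_⟩
        rw [SimpleGraph.dist_comm]
        rcases min_cases R (G.dist z a) with ⟨he, hle⟩ | ⟨he, hle⟩ <;> omega
      have hxball : ∀ a ∈ A, G.dist x a ≤ D x := fun a ha => hx ha
      have hpair : ∀ p ∈ insert (x, D x + 1) (insert (z, R) ((fun a => (a, 1)) '' A)),
          ∀ q ∈ insert (x, D x + 1) (insert (z, R) ((fun a => (a, 1)) '' A)),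
          (ball G p.1 p.2 ∩ ball G q.1 q.2).Nonempty := by
        intro p hp q hq
        simp only [Set.mem_insert_iff, Set.mem_image] at hp hq
        rcases hp with rfl | rfl | ⟨a, ha, rfl⟩ <;> rcases hq with rfl | rfl | ⟨b, hb, rfl⟩
        · exact ⟨x, mem_ball_iff.mpr (by simp [SimpleGraph.dist_self]),
            mem_ball_iff.mpr (by simp [SimpleGraph.dist_self])⟩
        · obtain ⟨w, hw1, hw2⟩ := hxz
          exact ⟨w, hw2, hw1⟩
        · exact ⟨b, mem_ball_iff.mpr (le_trans (hxball b hb) (Nat.le_succ _)),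
            mem_ball_iff.mpr (by simp [SimpleGraph.dist_self])⟩
        · obtain ⟨w, hw1, hw2⟩ := hxz
          exact ⟨w, hw1, hw2⟩
        · exact ⟨z, mem_ball_iff.mpr (by simp [SimpleGraph.dist_self]),
            mem_ball_iff.mpr (by simp [SimpleGraph.dist_self])⟩
        · exact haz b hb
        · exact ⟨a, mem_ball_iff.mpr (by simp [SimpleGraph.dist_self]),
            mem_ball_iff.mpr (le_trans (hxball a ha) (Nat.le_succ _))⟩
        · obtain ⟨w, hw1, hw2⟩ := haz a ha
          exact ⟨w, hw2, hw1⟩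
        · exact ⟨a, mem_ball_iff.mpr (by simp [SimpleGraph.dist_self]),
            mem_ball_iff.mpr (hcl1 b hb a ha)⟩
      obtain ⟨y, hy⟩ := hHellyP _ hpair
      have hyMem : ∀ p ∈ insert (x, D x + 1) (insert (z, R) ((fun a => (a, 1)) '' A)),
          G.dist p.1 y ≤ p.2 := fun p hp => Set.mem_iInter₂.mp hy p hp
      have hyx : G.dist x y ≤ D x + 1 := hyMem _ (Set.mem_insert _ _)
      have hyz : G.dist z y ≤ R := hyMem _ (Set.mem_insert_of_mem _ (Set.mem_insert _ _))
      have hya : ∀ a ∈ A, G.dist a y ≤ 1 := fun a ha =>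
        hyMem (a, 1) (Set.mem_insert_of_mem _ (Set.mem_insert_of_mem _ ⟨a, ha, rfl⟩))
      have hxy : G.dist x y = D x + 1 := by
        have h1 : G.dist z x ≤ G.dist z y + G.dist y x := hconn.dist_triangle
        have h2 : G.dist y x = G.dist x y := SimpleGraph.dist_comm
        omega
      have hya1 : ∀ a ∈ A, G.dist y a = 1 := by
        intro a ha
        have h1 : G.dist x y ≤ G.dist x a + G.dist a y := hconn.dist_triangle
        have h2 : G.dist x a ≤ D x := hx ha
        have h3 : G.dist a y = G.dist y a := SimpleGraph.dist_comm
        have h4 := hya a ha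
        omega
      have hyA : y ∉ A := by
        intro hyA
        have h1 := hya1 y hyA
        rw [SimpleGraph.dist_self] at h1
        omega
      have hyL : IsLeast ((fun a => G.dist y a) '' A) 1 := by
        constructor
        · obtain ⟨a0, ha0⟩ := hAne
          exact ⟨a0, ha0, hya1 a0 ha0⟩
        · rintro n ⟨a, ha, rfl⟩
          exact (hya1 a ha).ge
      have hfy : f y = 1 := by
        have hsub : A ⊆ ball G y 1 := fun a ha => mem_ball_iff.mpr (le_of_eq (hya1 a ha))
        have h := (hf2 y hyA 1 hyL).1 hsub
        rw [h]; norm_num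
      refine ⟨y, ?_⟩
      rw [hval1 x hx, hfy, hxy]
      push_cast
      ring
    · -- easy case: some a ∈ A has d(x,a) = D x + 1
      obtain ⟨a, ha, hna⟩ := Set.not_subset.mp hx
      have h1 : ¬ G.dist x a ≤ D x := hna
      have h2 : G.dist x a ≤ D x + 1 := hDub x a ha
      have h3 : G.dist x a = D x + 1 := by omega
      refine ⟨a, ?_⟩
      rw [hval2 x hx, hf1 a ha, h3]
      push_cast
      ring
  refine ⟨hI, fun x => ?_⟩
  obtain ⟨y0, hy0⟩ := hAtt x
  constructor
  · rintro v ⟨y, rfl⟩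
    have := hI x y
    simp only
    linarith
  · intro c hc
    have h := hc (Set.mem_range_self y0)
    linarith [hy0]
end HellyPaper
end

section
/- Let X be a Helly graph. A subset σ ⊆ X is a round clique if and only if σ is a singleton {x} for some vertex x, or σ is a nonempty intersection of a family of maximal cliques of X. -/
namespace HellyPaper

private lemma exists_maximal_clique (G : SimpleGraph V) {c : Set V}
    (hc : G.IsClique c) : ∃ τ, c ⊆ τ ∧ Maximal G.IsClique τ := by
  have H : ∀ ch ⊆ {s | G.IsClique s}, IsChain (· ⊆ ·) ch → ch.Nonempty →
      ∃ ub ∈ {s | G.IsClique s}, ∀ s ∈ ch, s ⊆ ub := by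
    rintro ch hch hchain ⟨s, hs⟩
    refine ⟨⋃₀ ch, ?_, fun t ht => Set.subset_sUnion_of_mem ht⟩
    intro a ha b hb hab
    obtain ⟨s1, hs1, ha1⟩ := ha
    obtain ⟨s2, hs2, hb2⟩ := hb
    rcases hchain.total hs1 hs2 with h | h
    · exact hch hs2 (h ha1) hb2 hab
    · exact hch hs1 ha1 (h hb2) hab
  obtain ⟨m, hcm, hm⟩ := zorn_subset_nonempty {s | G.IsClique s} H c hc
  exact ⟨m, hcm, hm⟩

private lemma adj_dist_le_one (G : SimpleGraph V) {a b : V} (h : G.Adj a b) :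
    G.dist a b ≤ 1 := SimpleGraph.dist_le (h.toWalk)

private lemma adj_of_dist_le_one (G : SimpleGraph V) (hconn : G.Connected)
    {a b : V} (hne : a ≠ b) (h : G.dist a b ≤ 1) : G.Adj a b := by
  have h0 : G.dist a b ≠ 0 := fun h0 => hne (hconn.dist_eq_zero_iff.mp h0)
  have h1 : G.dist a b = 1 := by omega
  obtain ⟨p, hp⟩ := (hconn a b).exists_walk_length_eq_dist
  rw [h1] at hp
  exact p.adj_of_length_eq_one hp

/-- In a Helly graph, a subset is a round clique if and only if it is a
singleton or a nonempty intersection of a (nonempty) family of maximal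
cliques. -/
theorem stmt6 {V : Type*} (G : SimpleGraph V) (hHelly : IsHellyGraph G)
    (σ : Set V) :
    IsRoundClique G σ ↔
      ((∃ x : V, σ = {x}) ∨
        (σ.Nonempty ∧ ∃ M : Set (Set V), M.Nonempty ∧
          (∀ τ ∈ M, Maximal G.IsClique τ) ∧ σ = ⋂₀ M)) := by
  obtain ⟨hconn, hH⟩ := hHelly
  constructor
  · rintro ⟨hne, hcl, S, hS⟩
    by_cases hsing : ∃ x : V, σ = {x}
    · exact Or.inl hsing
    refine Or.inr ⟨hne, {τ | Maximal G.IsClique τ ∧ σ ⊆ τ}, ?_, fun τ hτ => hτ.1, ?_⟩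
    · obtain ⟨τ, hστ, hτ⟩ := exists_maximal_clique G hcl
      exact ⟨τ, hτ, hστ⟩
    apply Set.Subset.antisymm
    · exact fun z hz => Set.mem_sInter.mpr fun τ hτ => hτ.2 hz
    intro z hz
    rw [Set.mem_sInter] at hz
    by_contra hzσ
    have hzne : ∀ s ∈ σ, z ≠ s := fun s hs h => hzσ (h ▸ hs)
    by_cases hadj : ∀ s ∈ σ, G.Adj z s
    · -- z adjacent to everything in σ
      have hzball : z ∉ ⋂ p ∈ S, ball G p.1 p.2 := hS ▸ hzσ
      simp only [Set.mem_iInter, not_forall] at hzball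
      obtain ⟨p, hpS, hpz⟩ := hzball
      set x := p.1 with hx
      set r := p.2 with hr
      have hdxz : r + 1 ≤ G.dist x z := by
        simp only [ball, Set.mem_setOf_eq, not_le] at hpz; omega
      have hσball : ∀ s ∈ σ, G.dist x s ≤ r := by
        intro s hs
        have := hS ▸ hs
        rw [Set.mem_iInter] at this
        exact (Set.mem_iInter.mp (this p) hpS)
      have hr1 : 1 ≤ r := by
        by_contra hr0
        apply hsing
        obtain ⟨s0, hs0⟩ := hne
        refine ⟨s0, Set.Subset.antisymm ?_ ?_⟩
        · intro a ha
          have h1 := hσball a ha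
          have h2 := hσball s0 hs0
          have hxa : x = a := hconn.dist_eq_zero_iff.mp (by omega)
          have hxs : x = s0 := hconn.dist_eq_zero_iff.mp (by omega)
          simp [← hxa, hxs]
        · intro a ha
          simp only [Set.mem_singleton_iff] at ha
          exact ha ▸ hs0
      set m := G.dist x z - 2 with hm
      have hrm : r ≤ m + 1 := by omega
      -- the family of balls
      set S' : Set (V × ℕ) := insert (x, m) {q | q.2 = 1 ∧ q.1 ∈ σ} with hS'
      have hball1 : ∀ s ∈ σ, (ball G x m ∩ ball G s 1).Nonempty := by
        intro s hs
        have hds : G.dist x s ≤ m + 1 := le_trans (hσball s hs) hrm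
        by_cases hle : G.dist x s ≤ m
        · exact ⟨s, hle, by simp [ball, SimpleGraph.dist_self]⟩
        · obtain ⟨q, hq⟩ := (hconn s x).exists_walk_length_eq_dist
          have hql : q.length = m + 1 := by
            rw [hq, SimpleGraph.dist_comm]; omega
          cases q with
          | nil => simp at hql
          | @cons _ t _ h q' =>
            refine ⟨t, ?_, ?_⟩
            · have : G.dist t x ≤ q'.length := SimpleGraph.dist_le q'
              have hq'l : q'.length = m := by
                simpa [SimpleGraph.Walk.length_cons] using hql
              simp only [ball, Set.mem_setOf_eq]
              rw [SimpleGraph.dist_comm]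
              omega
            · exact adj_dist_le_one G h
      have hpair : ∀ p₁ ∈ S', ∀ p₂ ∈ S',
          (ball G p₁.1 p₁.2 ∩ ball G p₂.1 p₂.2).Nonempty := by
        rintro p₁ hp₁ p₂ hp₂
        rcases hp₁ with h1 | h1 <;> rcases hp₂ with h2 | h2
        · exact ⟨x, by simp [h1, h2, ball, SimpleGraph.dist_self]⟩
        · obtain ⟨h2a, h2b⟩ := h2
          have := hball1 p₂.1 h2b
          rw [h1, h2a]
          exact this
        · obtain ⟨h1a, h1b⟩ := h1
          obtain ⟨w, hw1, hw2⟩ := hball1 p₁.1 h1b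
          rw [h2, h1a]
          exact ⟨w, hw2, hw1⟩
        · obtain ⟨h1a, h1b⟩ := h1
          obtain ⟨h2a, h2b⟩ := h2
          refine ⟨p₁.1, ?_, ?_⟩
          · simp [h1a, ball, SimpleGraph.dist_self]
          · rw [h2a]
            rcases eq_or_ne p₂.1 p₁.1 with h | h
            · simp [h, ball, SimpleGraph.dist_self]
            · exact adj_dist_le_one G (hcl h2b h1b h)
      obtain ⟨w, hw⟩ := hH S' hpair
      rw [Set.mem_iInter] at hw
      have hwx : G.dist x w ≤ m :=
        Set.mem_iInter.mp (hw (x, m)) (Set.mem_insert _ _)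
      have hwσ : ∀ s ∈ σ, G.dist s w ≤ 1 := fun s hs =>
        Set.mem_iInter.mp (hw (s, 1)) (Set.mem_insert_of_mem _ ⟨rfl, hs⟩)
      have hwz : 2 ≤ G.dist w z := by
        have := hconn.dist_triangle (u := x) (v := w) (w := z)
        omega
      -- insert w σ is a clique
      have hclw : G.IsClique (insert w σ) := by
        apply hcl.insert
        intro b hb hwb
        exact ((adj_of_dist_le_one G hconn (Ne.symm hwb)
          (hwσ b hb)).symm)
      obtain ⟨τ, hστ, hτ⟩ := exists_maximal_clique G hclw
      have hzτ : z ∈ τ := hz τ ⟨hτ, fun a ha => hστ (Set.mem_insert_of_mem _ ha)⟩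
      have hwτ : w ∈ τ := hστ (Set.mem_insert _ _)
      have hwzne : w ≠ z := by
        intro h
        rw [h, SimpleGraph.dist_self] at hwz
        omega
      have : G.Adj w z := hτ.1 hwτ hzτ hwzne
      have := adj_dist_le_one G this
      omega
    · push_neg at hadj
      obtain ⟨s, hs, hns⟩ := hadj
      obtain ⟨τ, hστ, hτ⟩ := exists_maximal_clique G hcl
      exact hns (hτ.1 (hz τ ⟨hτ, hστ⟩) (hστ hs) (hzne s hs))
  · rintro (⟨x, rfl⟩ | ⟨hne, M, hMne, hMmax, rfl⟩)
    · refine ⟨⟨x, rfl⟩, Set.pairwise_singleton x G.Adj, {(x, 0)}, ?_⟩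
      ext y
      simp only [Set.mem_iInter, Set.mem_singleton_iff, ball, Set.mem_setOf_eq]
      constructor
      · rintro rfl p rfl
        simp [SimpleGraph.dist_self]
      · intro h
        have := h (x, 0) rfl
        simp only [Nat.le_zero] at this
        exact (hconn.dist_eq_zero_iff.mp this).symm
    · obtain ⟨τ₀, hτ₀⟩ := hMne
      refine ⟨hne, ?_, {q | q.2 = 1 ∧ ∃ τ ∈ M, q.1 ∈ τ}, ?_⟩
      · exact ((hMmax τ₀ hτ₀).1).subset (Set.sInter_subset_of_mem hτ₀)
      · apply Set.Subset.antisymm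
        · intro z hz
          rw [Set.mem_sInter] at hz
          rw [Set.mem_iInter]
          rintro ⟨v, n⟩
          rw [Set.mem_iInter]
          rintro ⟨rfl, τ, hτ, hvτ⟩
          simp only [ball, Set.mem_setOf_eq]
          rcases eq_or_ne v z with h | h
          · simp [h, SimpleGraph.dist_self]
          · exact adj_dist_le_one G ((hMmax τ hτ).1 hvτ (hz τ hτ) h)
        · intro z hz
          rw [Set.mem_iInter] at hz
          rw [Set.mem_sInter]
          intro τ hτ
          have hzτ : ∀ v ∈ τ, G.dist v z ≤ 1 := by
            intro v hv
            exact Set.mem_iInter.mp (hz (v, 1)) ⟨rfl, τ, hτ, hv⟩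
          have hclz : G.IsClique (insert z τ) := by
            apply ((hMmax τ hτ).1).insert
            intro b hb hzb
            exact (adj_of_dist_le_one G hconn (Ne.symm hzb) (hzτ b hb)).symm
          have := (hMmax τ hτ).2 hclz (Set.subset_insert _ _)
          exact this (Set.mem_insert _ _)

end HellyPaper
end

section
/- Let X be a Helly graph, and let σ, τ be two distinct round cliques of X, with corresponding points f_σ, f_τ ∈ E(X) under the bijection p ↦ ⋂_{x∈X} B(x, ⌈p(x)⌉) between {p ∈ E(X) : ∀ x, p(x) ∈ (1/2)ℕ} and the round cliques of X. Then d∞(f_σ, f_τ) = 1/2 if and only if σ ∩ τ ≠ ∅ and σ ∪ τ is a clique of X. (Thus the graph on half-integer points of E(X) with edges at d∞-distance 1/2 is isomorphic to the graph on round cliques with edges {σ,τ} whenever σ ∩ τ ≠ ∅ and σ ∪ τ is a clique; this common graph is the first Helly subdivision X' of X.) -/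
namespace HellyPaper

section Aux

variable {V : Type*} {G : SimpleGraph V} {f : V → ℝ}

private lemma walk_split_s8 {x y : V} (w : G.Walk x y) :
    ∀ (r s : ℕ), w.length ≤ r + s →
      ∃ (z : V) (w1 : G.Walk x z) (w2 : G.Walk z y), w1.length ≤ r ∧ w2.length ≤ s := by
  induction w with
  | nil => exact fun r s _ => ⟨_, .nil, .nil, by simp, by simp⟩
  | cons h w ih =>
    intro r s hl
    cases r with
    | zero => exact ⟨_, .nil, .cons h w, by simp, by simpa using hl⟩
    | succ r =>
      obtain ⟨z, w1, w2, h1, h2⟩ := ih r s (by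
        simp only [SimpleGraph.Walk.length_cons] at hl; omega)
      exact ⟨z, .cons h w1, w2, by simp only [SimpleGraph.Walk.length_cons]; omega, h2⟩

private lemma balls_intersect (hconn : G.Connected) {x y : V} {r s : ℕ}
    (h : G.dist x y ≤ r + s) : (ball G x r ∩ ball G y s).Nonempty := by
  obtain ⟨w, hw⟩ := hconn.exists_walk_length_eq_dist x y
  obtain ⟨z, w1, w2, h1, h2⟩ := walk_split_s8 w r s (by rw [hw]; exact h)
  refine ⟨z, le_trans (SimpleGraph.dist_le w1) h1, ?_⟩
  have : G.dist z y ≤ s := le_trans (SimpleGraph.dist_le w2) h2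
  simpa [ball, SimpleGraph.dist_comm] using this

private lemma injHull_nonneg (hf : f ∈ InjHull G) (x : V) : 0 ≤ f x := by
  have := hf.1 x x
  simp only [SimpleGraph.dist_self, Nat.cast_zero] at this
  linarith

private lemma injHull_ge (hf : f ∈ InjHull G) (x y : V) :
    (G.dist x y : ℝ) - f y ≤ f x :=
  (hf.2 x).1 ⟨y, rfl⟩

private lemma injHull_le_of_forall (hf : f ∈ InjHull G) (x : V) {c : ℝ}
    (h : ∀ y, (G.dist x y : ℝ) - f y ≤ c) : f x ≤ c :=
  (hf.2 x).2 (by rintro r ⟨y, rfl⟩; exact h y)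

private lemma injHull_lip (hconn : G.Connected) (hf : f ∈ InjHull G) (x y : V) :
    f x ≤ f y + G.dist x y := by
  apply injHull_le_of_forall hf
  intro z
  have h1 : (G.dist x z : ℝ) ≤ (G.dist x y : ℝ) + (G.dist y z : ℝ) := by
    exact_mod_cast hconn.dist_triangle (v := y)
  have h2 := injHull_ge hf y z
  linarith

private lemma half_cases (hh : halfInt f) (x : V) :
    (∃ m : ℕ, f x = (m : ℝ) ∧ ((⌈f x⌉ : ℤ) : ℝ) = (m : ℝ)) ∨
    (∃ m : ℕ, f x = (m : ℝ) + 1/2 ∧ ((⌈f x⌉ : ℤ) : ℝ) = (m : ℝ) + 1) := by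
  obtain ⟨k, hk⟩ := hh x
  rcases Nat.even_or_odd k with ⟨m, hm⟩ | ⟨m, hm⟩
  · left
    have hfx : f x = (m : ℝ) := by rw [hk, hm]; push_cast; ring
    have hc : ⌈f x⌉ = (m : ℤ) := Int.ceil_eq_iff.mpr
      ⟨by rw [hfx]; push_cast; linarith, by rw [hfx]; push_cast; linarith⟩
    exact ⟨m, hfx, by rw [hc]; push_cast; ring⟩
  · right
    have hfx : f x = (m : ℝ) + 1/2 := by rw [hk, hm]; push_cast; ring
    have hc : ⌈f x⌉ = (m : ℤ) + 1 := Int.ceil_eq_iff.mpr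
      ⟨by rw [hfx]; push_cast; linarith, by rw [hfx]; push_cast; linarith⟩
    exact ⟨m, hfx, by rw [hc]; push_cast; ring⟩

private lemma ceil_le_add_half (hh : halfInt f) (x : V) :
    ((⌈f x⌉ : ℤ) : ℝ) ≤ f x + 1/2 := by
  rcases half_cases hh x with ⟨m, h1, h2⟩ | ⟨m, h1, h2⟩ <;> rw [h2, h1] <;> linarith

private lemma nat_le_of_le_half {n m : ℕ} (h : (n : ℝ) ≤ (m : ℝ) + 1/2) : n ≤ m := by
  have h1 : (n : ℝ) < (m : ℝ) + 1 := by linarith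
  have h2 : n < m + 1 := by exact_mod_cast h1
  omega

/-- The natural-number radius `⌈f x⌉` associated to a nonnegative function. -/
private lemma rad_cast (hf : f ∈ InjHull G) (x : V) :
    (((⌈f x⌉).toNat : ℕ) : ℝ) = ((⌈f x⌉ : ℤ) : ℝ) := by
  have : ((⌈f x⌉).toNat : ℤ) = ⌈f x⌉ := Int.toNat_of_nonneg (Int.ceil_nonneg (injHull_nonneg hf x))
  exact_mod_cast congrArg (fun z : ℤ => (z : ℝ)) this

private lemma mem_phi_of (hf : f ∈ InjHull G) {z : V}
    (h : ∀ x, G.dist x z ≤ (⌈f x⌉).toNat) : z ∈ phi G f := by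
  intro x
  have := h x
  calc (G.dist x z : ℝ) ≤ (((⌈f x⌉).toNat : ℕ) : ℝ) := by exact_mod_cast this
    _ = _ := rad_cast hf x

private lemma f_le_half_of_mem_phi (hf : f ∈ InjHull G) (hh : halfInt f) {z : V}
    (hz : z ∈ phi G f) : f z ≤ 1/2 := by
  apply injHull_le_of_forall hf
  intro y
  have h1 : (G.dist z y : ℝ) ≤ ((⌈f y⌉ : ℤ) : ℝ) := by
    rw [SimpleGraph.dist_comm]; exact hz y
  have h2 := ceil_le_add_half hh y
  linarith

/-- Key Helly consequence: if `f x` has odd half-integer value `k + 1/2`, then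
there is a point of `φ(f)` at distance at most `k` from `x`. -/
private lemma exists_near (hH : IsHellyGraph G) (hf : f ∈ InjHull G) (hh : halfInt f)
    (x : V) (k : ℕ) (hx : f x = (k : ℝ) + 1/2) :
    ∃ p ∈ phi G f, G.dist x p ≤ k := by
  set rf : V → ℕ := fun v => (⌈f v⌉).toNat with hrf
  have hrc : ∀ v, ((rf v : ℕ) : ℝ) = ((⌈f v⌉ : ℤ) : ℝ) := fun v => rad_cast hf v
  have hflerf : ∀ v, f v ≤ (rf v : ℝ) := fun v => by rw [hrc v]; exact Int.le_ceil _
  have hrflef : ∀ v, (rf v : ℝ) ≤ f v + 1/2 := fun v => by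
    rw [hrc v]; exact ceil_le_add_half hh v
  set S : Set (V × ℕ) := Set.range (fun u => (u, rf u)) ∪ {(x, k)} with hS
  -- pairwise distance bounds
  have hA : ∀ u v : V, G.dist u v ≤ rf u + rf v := by
    intro u v
    have : (G.dist u v : ℝ) ≤ (rf u : ℝ) + (rf v : ℝ) := by
      have := hf.1 u v
      have h1 := hflerf u; have h2 := hflerf v; linarith
    exact_mod_cast this
  have hB : ∀ u : V, G.dist u x ≤ rf u + k := by
    intro u
    apply nat_le_of_le_half (m := rf u + k)
    have h0 : (G.dist u x : ℝ) ≤ f u + f x := hf.1 u x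
    have h1 := hflerf u
    push_cast
    rw [hx] at h0
    linarith
  have hpair : ∀ p ∈ S, ∀ q ∈ S, (ball G p.1 p.2 ∩ ball G q.1 q.2).Nonempty := by
    rintro p hp q hq
    apply balls_intersect hH.1
    rcases hp with ⟨u, rfl⟩ | hp <;> rcases hq with ⟨v, rfl⟩ | hq
    · exact hA u v
    · rw [Set.mem_singleton_iff] at hq; rw [hq]; exact hB u
    · rw [Set.mem_singleton_iff] at hp; rw [hp]
      simpa [SimpleGraph.dist_comm, Nat.add_comm] using hB v
    · rw [Set.mem_singleton_iff] at hp hq; rw [hp, hq]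
      simp [SimpleGraph.dist_self]
  obtain ⟨z, hz⟩ := hH.2 S hpair
  rw [Set.mem_iInter₂] at hz
  refine ⟨z, mem_phi_of hf fun u => hz (u, rf u) (Or.inl ⟨u, rfl⟩), ?_⟩
  exact hz (x, k) (Or.inr rfl)

private lemma clique_dist_le_one {s : Set V} (hc : G.IsClique s) {a b : V}
    (ha : a ∈ s) (hb : b ∈ s) : G.dist a b ≤ 1 := by
  rcases eq_or_ne a b with rfl | h
  · simp [SimpleGraph.dist_self]
  · exact le_of_eq (SimpleGraph.dist_eq_one_iff_adj.mpr (hc ha hb h))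

/-- If `p` lies in the round clique `σ`, `z₀ ∈ σ ∩ τ` and `σ ∪ τ` is a clique, then
`g = f_τ` satisfies `g p ≤ 1`. -/
private lemma g_le_one (hH : IsHellyGraph G) {g : V → ℝ} {σ τ : Set V}
    (hg : g ∈ InjHull G) (hhg : halfInt g) (hφτ : phi G g = τ)
    (hclique : G.IsClique (σ ∪ τ)) {p : V} (hpστ : p ∈ σ ∪ τ)
    {z₀ : V} (hz₀τ : z₀ ∈ τ) : g p ≤ 1 := by
  apply injHull_le_of_forall hg
  intro v
  rcases half_cases hhg v with ⟨m, hm, hcm⟩ | ⟨m, hm, hcm⟩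
  · -- g v is an integer; use z₀ ∈ τ = φ(g)
    have hz₀φ : z₀ ∈ phi G g := by rw [hφτ]; exact hz₀τ
    have h1 : (G.dist v z₀ : ℝ) ≤ (m : ℝ) := by
      have := hz₀φ v; rw [hcm] at this; exact this
    have h2 : G.dist p z₀ ≤ 1 := clique_dist_le_one hclique hpστ (Or.inr hz₀τ)
    have h3 : (G.dist p v : ℝ) ≤ (G.dist p z₀ : ℝ) + (G.dist z₀ v : ℝ) := by
      exact_mod_cast hH.1.dist_triangle (v := z₀)
    have h4 : (G.dist z₀ v : ℝ) = (G.dist v z₀ : ℝ) := by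
      norm_cast; exact SimpleGraph.dist_comm ..
    have h5 : (G.dist p z₀ : ℝ) ≤ 1 := by exact_mod_cast h2
    rw [hm]; linarith
  · -- g v = m + 1/2; find w ∈ τ at distance ≤ m from v
    obtain ⟨w, hwφ, hw⟩ := exists_near hH hg hhg v m hm
    have hwτ : w ∈ τ := by rw [← hφτ]; exact hwφ
    have h2 : G.dist p w ≤ 1 := clique_dist_le_one hclique hpστ (Or.inr hwτ)
    have h3 : (G.dist p v : ℝ) ≤ (G.dist p w : ℝ) + (G.dist w v : ℝ) := by
      exact_mod_cast hH.1.dist_triangle (v := w)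
    have h4 : (G.dist w v : ℝ) ≤ (m : ℝ) := by
      rw [show G.dist w v = G.dist v w from SimpleGraph.dist_comm ..]
      exact_mod_cast hw
    have h5 : (G.dist p w : ℝ) ≤ 1 := by exact_mod_cast h2
    rw [hm]; linarith

/-- Central step: under the right-hand side hypotheses, `g ≤ f + 1/2` pointwise. -/
private lemma no_gap (hH : IsHellyGraph G) {f g : V → ℝ} {σ τ : Set V}
    (hf : f ∈ InjHull G) (hg : g ∈ InjHull G) (hhf : halfInt f) (hhg : halfInt g)
    (hφσ : phi G f = σ) (hφτ : phi G g = τ)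
    (hclique : G.IsClique (σ ∪ τ)) {z₀ : V} (hz₀σ : z₀ ∈ σ) (hz₀τ : z₀ ∈ τ)
    (x : V) : g x ≤ f x + 1/2 := by
  by_contra hcon
  push_neg at hcon
  -- the gap is at least 1 since both values are half-integers
  have hgap : f x + 1 ≤ g x := by
    obtain ⟨a, ha⟩ := hhf x
    obtain ⟨b, hb⟩ := hhg x
    rw [ha, hb] at hcon ⊢
    have h1 : (a : ℝ) + 1 < (b : ℝ) := by linarith
    have h2 : a + 1 < b := by exact_mod_cast h1
    have h3 : (a : ℝ) + 2 ≤ (b : ℝ) := by exact_mod_cast h2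
    linarith
  have hz₀f : z₀ ∈ phi G f := by rw [hφσ]; exact hz₀σ
  have hz₀g : z₀ ∈ phi G g := by rw [hφτ]; exact hz₀τ
  have h1 : f z₀ ≤ 1/2 := f_le_half_of_mem_phi hf hhf hz₀f
  have h2 : g z₀ ≤ 1/2 := f_le_half_of_mem_phi hg hhg hz₀g
  set D := G.dist x z₀ with hD
  have h3 : (D : ℝ) ≤ f x + f z₀ := hf.1 x z₀
  have h4 : g x ≤ g z₀ + (D : ℝ) := injHull_lip hH.1 hg x z₀
  have h5 : f x = (D : ℝ) - 1/2 := by linarith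
  have hD1 : 1 ≤ D := by
    rcases Nat.eq_zero_or_pos D with h | h
    · exfalso
      have := injHull_nonneg hf x
      rw [h5, h] at this
      norm_num at this
    · exact h
  obtain ⟨k, hk⟩ : ∃ k : ℕ, D = k + 1 := ⟨D - 1, by omega⟩
  have hx' : f x = (k : ℝ) + 1/2 := by rw [h5, hk]; push_cast; ring
  obtain ⟨p, hpφ, hpd⟩ := exists_near hH hf hhf x k hx'
  have hpσ : p ∈ σ := by rw [← hφσ]; exact hpφ
  have h6 : g p ≤ 1 := g_le_one hH hg hhg hφτ hclique (Or.inl hpσ) hz₀τ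
  have h7 : g x ≤ g p + (G.dist x p : ℝ) := injHull_lip hH.1 hg x p
  have h8 : (G.dist x p : ℝ) ≤ (k : ℝ) := by exact_mod_cast hpd
  have h9 : ((k : ℝ) + 1) = (D : ℝ) := by rw [hk]; push_cast; ring
  linarith

end Aux

/-- Two distinct round cliques σ, τ of a Helly graph, with corresponding
half-integer points f_σ, f_τ of the injective hull, satisfy
d∞(f_σ, f_τ) = 1/2 if and only if σ ∩ τ ≠ ∅ and σ ∪ τ is a clique. -/
theorem stmt8 {V : Type*} (G : SimpleGraph V) (hHelly : IsHellyGraph G)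
    (σ τ : Set V) (hσr : IsRoundClique G σ) (hτr : IsRoundClique G τ)
    (hστ : σ ≠ τ)
    (fσ fτ : V → ℝ) (hfσ : fσ ∈ InjHull G) (hfτ : fτ ∈ InjHull G)
    (hσhalf : halfInt fσ) (hτhalf : halfInt fτ)
    (hφσ : phi G fσ = σ) (hφτ : phi G fτ = τ) :
    supDist fσ fτ = 1 / 2 ↔ ((σ ∩ τ).Nonempty ∧ G.IsClique (σ ∪ τ)) := by
  obtain ⟨zσ, hzσ⟩ := hσr.1
  haveI : Nonempty V := ⟨zσ⟩
  have hconn := hHelly.1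
  have hσφ : ∀ z ∈ σ, fσ z ≤ 1/2 := fun z hz =>
    f_le_half_of_mem_phi hfσ hσhalf (by rw [hφσ]; exact hz)
  have hτφ : ∀ z ∈ τ, fτ z ≤ 1/2 := fun z hz =>
    f_le_half_of_mem_phi hfτ hτhalf (by rw [hφτ]; exact hz)
  constructor
  · intro hsup
    -- pointwise bound |fσ x - fτ x| ≤ 1/2
    have hBdd : BddAbove (Set.range fun x => |fσ x - fτ x|) := by
      by_contra hb
      rw [supDist, Real.iSup_of_not_bddAbove hb] at hsup
      norm_num at hsup
    have hpt : ∀ x, |fσ x - fτ x| ≤ 1/2 := by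
      intro x
      have := le_ciSup hBdd x
      rw [← supDist, hsup] at this
      exact this
    constructor
    · -- σ ∩ τ is nonempty, by the Helly property
      set rS : V → ℕ := fun v => (⌈fσ v⌉).toNat with hrS
      set rT : V → ℕ := fun v => (⌈fτ v⌉).toNat with hrT
      have hrcS : ∀ v, ((rS v : ℕ) : ℝ) = ((⌈fσ v⌉ : ℤ) : ℝ) := fun v => rad_cast hfσ v
      have hrcT : ∀ v, ((rT v : ℕ) : ℝ) = ((⌈fτ v⌉ : ℤ) : ℝ) := fun v => rad_cast hfτ v
      have hSle : ∀ v, fσ v ≤ (rS v : ℝ) := fun v => by rw [hrcS v]; exact Int.le_ceil _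
      have hTle : ∀ v, fτ v ≤ (rT v : ℝ) := fun v => by rw [hrcT v]; exact Int.le_ceil _
      set S : Set (V × ℕ) := Set.range (fun v => (v, min (rS v) (rT v))) with hS
      have hmix : ∀ u v : V, G.dist u v ≤ rS u + rT v := by
        intro u v
        apply nat_le_of_le_half (m := rS u + rT v)
        have h0 : (G.dist u v : ℝ) ≤ fσ u + fσ v := hfσ.1 u v
        have h1 : fσ v - fτ v ≤ 1/2 := le_trans (le_abs_self _) (hpt v)
        have h2 := hSle u
        have h3 := hTle v
        push_cast
        linarith
      have hdd : ∀ u v : V, G.dist u v ≤ min (rS u) (rT u) + min (rS v) (rT v) := by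
        intro u v
        have hAA : G.dist u v ≤ rS u + rS v := by
          have : (G.dist u v : ℝ) ≤ (rS u : ℝ) + (rS v : ℝ) := by
            have := hfσ.1 u v; have h2 := hSle u; have h3 := hSle v; linarith
          exact_mod_cast this
        have hBB : G.dist u v ≤ rT u + rT v := by
          have : (G.dist u v : ℝ) ≤ (rT u : ℝ) + (rT v : ℝ) := by
            have := hfτ.1 u v; have h2 := hTle u; have h3 := hTle v; linarith
          exact_mod_cast this
        have hCC := hmix u v
        have hDD : G.dist u v ≤ rT u + rS v := by
          have := hmix v u
          rw [SimpleGraph.dist_comm] at this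
          omega
        omega
      have hpair : ∀ p ∈ S, ∀ q ∈ S, (ball G p.1 p.2 ∩ ball G q.1 q.2).Nonempty := by
        rintro p ⟨u, rfl⟩ q ⟨v, rfl⟩
        exact balls_intersect hconn (hdd u v)
      obtain ⟨z, hz⟩ := hHelly.2 S hpair
      rw [Set.mem_iInter₂] at hz
      have hzb : ∀ v : V, G.dist v z ≤ min (rS v) (rT v) := fun v =>
        hz (v, min (rS v) (rT v)) ⟨v, rfl⟩
      refine ⟨z, ?_, ?_⟩
      · rw [← hφσ]
        exact mem_phi_of hfσ fun v => le_trans (hzb v) (min_le_left _ _)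
      · rw [← hφτ]
        exact mem_phi_of hfτ fun v => le_trans (hzb v) (min_le_right _ _)
    · -- σ ∪ τ is a clique
      have key : ∀ a b : V, a ∈ σ → b ∈ τ → a ≠ b → G.Adj a b := by
        intro a b ha hb hab
        have h1 : fσ a ≤ 1/2 := hσφ a ha
        have h2 : fτ b ≤ 1/2 := hτφ b hb
        have h3 : fσ b - fτ b ≤ 1/2 := le_trans (le_abs_self _) (hpt b)
        have h4 : (G.dist a b : ℝ) ≤ fσ a + fσ b := hfσ.1 a b
        have h5 : G.dist a b ≤ 1 := nat_le_of_le_half (m := 1) (by push_cast; linarith)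
        have h6 : G.dist a b ≠ 0 := by
          rw [(hconn.dist_eq_zero_iff).ne]
          simpa using hab
        exact SimpleGraph.dist_eq_one_iff_adj.mp (by omega)
      rintro a (ha | ha) b (hb | hb) hab
      · exact hσr.2.1 ha hb hab
      · exact key a b ha hb hab
      · exact (key b a hb ha (Ne.symm hab)).symm
      · exact hτr.2.1 ha hb hab
  · rintro ⟨⟨z₀, hz₀σ, hz₀τ⟩, hclique⟩
    have hpt : ∀ x, |fσ x - fτ x| ≤ 1/2 := by
      intro x
      have h1 : fτ x ≤ fσ x + 1/2 :=
        no_gap hHelly hfσ hfτ hσhalf hτhalf hφσ hφτ hclique hz₀σ hz₀τ x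
      have h2 : fσ x ≤ fτ x + 1/2 :=
        no_gap hHelly hfτ hfσ hτhalf hσhalf hφτ hφσ
          (by rwa [Set.union_comm]) hz₀τ hz₀σ x
      rw [abs_le]; constructor <;> linarith
    have hBdd : BddAbove (Set.range fun x => |fσ x - fτ x|) :=
      ⟨1/2, by rintro r ⟨x, rfl⟩; exact hpt x⟩
    obtain ⟨x₀, hx₀⟩ : ∃ x, fσ x ≠ fτ x := by
      by_contra h
      push_neg at h
      exact hστ (by rw [← hφσ, ← hφτ, funext h])
    have hge : 1/2 ≤ |fσ x₀ - fτ x₀| := by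
      obtain ⟨a, ha⟩ := hσhalf x₀
      obtain ⟨b, hb⟩ := hτhalf x₀
      rw [ha, hb] at hx₀ ⊢
      have hab : a ≠ b := by
        intro h; exact hx₀ (by rw [h])
      have h1 : (1 : ℝ) ≤ |(a : ℝ) - (b : ℝ)| := by
        rcases Nat.lt_or_ge a b with h | h
        · have hc : (a : ℝ) + 1 ≤ (b : ℝ) := by exact_mod_cast h
          rw [abs_sub_comm]
          exact le_abs.mpr (Or.inl (by linarith))
        · have hb' : b < a := lt_of_le_of_ne h (Ne.symm hab)
          have hc : (b : ℝ) + 1 ≤ (a : ℝ) := by exact_mod_cast hb'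
          exact le_abs.mpr (Or.inl (by linarith))
      rw [show (a : ℝ)/2 - (b : ℝ)/2 = ((a : ℝ) - (b : ℝ))/2 by ring, abs_div]
      rw [show |(2:ℝ)| = 2 by norm_num]
      linarith
    refine le_antisymm (ciSup_le hpt) ?_
    exact le_trans hge (le_ciSup hBdd x₀)

end HellyPaper
end

section
/- Let X be a Helly graph such that every strictly increasing chain of round cliques of X has length at most N (with N ≥ 1), and let g be a graph automorphism of X that is not elliptic (i.e. some, equivalently every, orbit of ⟨g⟩ in X is unbounded). Then for every vertex x of X and every n ∈ ℕ, d(x, g^n · x) ≥ n/(2N); in particular g has infinite order (g^n is not the identity automorphism for any n ≥ 1). -/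
namespace HellyPaper

section Aux

open Filter

theorem _root_.Equiv.Perm.apply_inv_self {α : Type*} (f : Equiv.Perm α) (x : α) : f (f⁻¹ x) = x :=
  Equiv.apply_symm_apply f x

theorem _root_.Equiv.Perm.inv_apply_self {α : Type*} (f : Equiv.Perm α) (x : α) : f⁻¹ (f x) = x :=
  Equiv.symm_apply_apply f x

variable {V : Type*} {G : SimpleGraph V}

lemma autInv {σ : Equiv.Perm V} (h : IsGraphAut G σ) : IsGraphAut G σ⁻¹ := by
  intro x y
  have h2 := (h (σ⁻¹ x) (σ⁻¹ y)).symm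
  simpa using h2

lemma autPow {σ : Equiv.Perm V} (h : IsGraphAut G σ) (k : ℕ) : IsGraphAut G (σ ^ k) := by
  induction k with
  | zero => intro x y; simp
  | succ m ih =>
    intro x y
    have hs : ∀ z : V, (σ ^ (m + 1)) z = (σ ^ m) (σ z) := by
      intro z; rw [pow_succ]; rfl
    rw [hs x, hs y]
    exact (ih (σ x) (σ y)).trans (h x y)

lemma autDist (hc : G.Connected) {σ : Equiv.Perm V} (hσ : IsGraphAut G σ) (x y : V) :
    G.dist (σ x) (σ y) = G.dist x y := by
  have hle : ∀ (τ : Equiv.Perm V), IsGraphAut G τ → ∀ a b : V,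
      G.dist (τ a) (τ b) ≤ G.dist a b := by
    intro τ hτ a b
    obtain ⟨w, hw⟩ := hc.exists_walk_length_eq_dist a b
    have h3 := SimpleGraph.dist_le
      (w.map (⟨(τ : V → V), fun h => (hτ _ _).mpr h⟩ : G →g G))
    rw [SimpleGraph.Walk.length_map, hw] at h3
    exact h3
  refine le_antisymm (hle σ hσ x y) ?_
  have h2 := hle σ⁻¹ (autInv hσ) (σ x) (σ y)
  simpa using h2

lemma walkSplit (hc : G.Connected) (a b : V) (r s : ℕ) (h : G.dist a b ≤ r + s) :
    ∃ z : V, G.dist a z ≤ r ∧ G.dist z b ≤ s := by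
  have hget : ∀ {a b : V} (w : G.Walk a b) (k : ℕ),
      G.dist a (w.getVert k) ≤ k ∧ G.dist (w.getVert k) b ≤ w.length - k := by
    intro a b w
    induction w with
    | nil => intro k; simp [SimpleGraph.Walk.getVert, SimpleGraph.dist_self]
    | @cons u c b h' p ih =>
      intro k
      cases k with
      | zero =>
        refine ⟨by simp, ?_⟩
        simpa using SimpleGraph.dist_le (SimpleGraph.Walk.cons h' p)
      | succ k =>
        obtain ⟨ih1, ih2⟩ := ih k
        rw [SimpleGraph.Walk.getVert_cons_succ]
        constructor
        · have hadj : G.dist u c = 1 := SimpleGraph.dist_eq_one_iff_adj.mpr h'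
          have htri := hc.dist_triangle (u := u) (v := c) (w := p.getVert k)
          omega
        · have hlen : (SimpleGraph.Walk.cons h' p).length = p.length + 1 := by
            simp [SimpleGraph.Walk.length_cons]
          omega
  obtain ⟨w, hw⟩ := hc.exists_walk_length_eq_dist a b
  obtain ⟨h1, h2⟩ := hget w (min r w.length)
  refine ⟨w.getVert (min r w.length), ?_, ?_⟩
  · omega
  · omega

lemma exists_good_rho (G : SimpleGraph V) [Nonempty V] (g : Equiv.Perm V)
    (hdg : ∀ x y : V, G.dist (g x) (g y) = G.dist x y)
    (L : ℝ) (p0 : V → ℝ)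
    (hp01 : ∀ y z : V, (G.dist y z : ℝ) ≤ p0 y + p0 z)
    (hp0d : ∀ y : V, |p0 (g⁻¹ y) - p0 y| ≤ L) :
    ∃ ρ : V → ℝ, (∀ y z : V, (G.dist y z : ℝ) ≤ ρ y + ρ z) ∧ (∀ y, 0 ≤ ρ y) ∧
      (∀ y : V, |ρ (g⁻¹ y) - ρ y| ≤ L) ∧
      (∀ z : V, ρ z ≤ ⨆ x : V, ((G.dist x z : ℝ) - ρ x)) := by
  classical
  have dcomm : ∀ a b : V, (G.dist a b : ℝ) = (G.dist b a : ℝ) := by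
    intro a b
    exact_mod_cast congrArg (Nat.cast : ℕ → ℝ) (SimpleGraph.dist_comm (u := a) (v := b))
  have dself : ∀ a : V, (G.dist a a : ℝ) = 0 := by
    intro a
    exact_mod_cast congrArg (Nat.cast : ℕ → ℝ) (SimpleGraph.dist_self (G := G) (v := a))
  set star : (V → ℝ) → V → ℝ := fun p y => ⨆ x : V, ((G.dist x y : ℝ) - p x) with hstar
  set T : (V → ℝ) → V → ℝ := fun p y => (p y + star p y) / 2 with hT
  have hbdd : ∀ (p : V → ℝ), (∀ y z : V, (G.dist y z : ℝ) ≤ p y + p z) →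
      ∀ y : V, BddAbove (Set.range fun x : V => ((G.dist x y : ℝ) - p x)) := by
    intro p hp y
    refine ⟨p y, ?_⟩
    rintro t ⟨x, rfl⟩
    have := hp x y
    dsimp only
    linarith
  have hstar_ge : ∀ (p : V → ℝ), (∀ y z : V, (G.dist y z : ℝ) ≤ p y + p z) → ∀ (y z : V),
      (G.dist z y : ℝ) - p z ≤ star p y := by
    intro p hp y z
    exact le_ciSup (hbdd p hp y) z
  have hstar_le : ∀ (p : V → ℝ), (∀ y z : V, (G.dist y z : ℝ) ≤ p y + p z) → ∀ (y : V),
      star p y ≤ p y := by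
    intro p hp y
    refine ciSup_le fun x => ?_
    have := hp x y
    linarith
  have hTP1 : ∀ (p : V → ℝ), (∀ y z : V, (G.dist y z : ℝ) ≤ p y + p z) →
      (∀ y z : V, (G.dist y z : ℝ) ≤ T p y + T p z) := by
    intro p hp y z
    have m1 : (G.dist y z : ℝ) ≤ star p y + p z := by
      have := hstar_ge p hp y z
      rw [dcomm y z]; linarith
    have m2 : (G.dist y z : ℝ) ≤ star p z + p y := by
      have := hstar_ge p hp z y
      linarith
    have e1 : T p y = (p y + star p y) / 2 := rfl
    rw [e1, show T p z = (p z + star p z) / 2 from rfl]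
    linarith
  have hstar_drift : ∀ (p : V → ℝ), (∀ y z : V, (G.dist y z : ℝ) ≤ p y + p z) →
      (∀ y : V, |p (g⁻¹ y) - p y| ≤ L) →
      ∀ y : V, |star p (g⁻¹ y) - star p y| ≤ L := by
    intro p hp hd y
    have le1 : star p (g⁻¹ y) ≤ star p y + L := by
      refine ciSup_le fun x => ?_
      have h1 : (G.dist x (g⁻¹ y) : ℝ) = (G.dist (g x) y : ℝ) := by
        have := hdg x (g⁻¹ y)
        rw [Equiv.Perm.apply_inv_self] at this
        exact_mod_cast congrArg (Nat.cast : ℕ → ℝ) this.symm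
      have h2 : |p (g⁻¹ (g x)) - p (g x)| ≤ L := hd (g x)
      rw [Equiv.Perm.inv_apply_self] at h2
      have h3 := (abs_le.mp h2).1
      have h4 := hstar_ge p hp y (g x)
      rw [h1]; linarith
    have le2 : star p y ≤ star p (g⁻¹ y) + L := by
      refine ciSup_le fun x => ?_
      have h1 : (G.dist (g⁻¹ x) (g⁻¹ y) : ℝ) = (G.dist x y : ℝ) := by
        have := hdg (g⁻¹ x) (g⁻¹ y)
        rw [Equiv.Perm.apply_inv_self, Equiv.Perm.apply_inv_self] at this
        exact_mod_cast congrArg (Nat.cast : ℕ → ℝ) this.symm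
      have h2 := (abs_le.mp (hd x)).2
      have h4 := hstar_ge p hp (g⁻¹ y) (g⁻¹ x)
      rw [h1] at h4
      linarith
    rw [abs_le]; constructor <;> linarith
  have hTdrift : ∀ (p : V → ℝ), (∀ y z : V, (G.dist y z : ℝ) ≤ p y + p z) →
      (∀ y : V, |p (g⁻¹ y) - p y| ≤ L) →
      ∀ y : V, |T p (g⁻¹ y) - T p y| ≤ L := by
    intro p hp hd y
    have h1 := abs_le.mp (hd y)
    have h2 := abs_le.mp (hstar_drift p hp hd y)
    have e1 : T p (g⁻¹ y) = (p (g⁻¹ y) + star p (g⁻¹ y)) / 2 := rfl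
    rw [abs_le, e1, show T p y = (p y + star p y) / 2 from rfl]
    constructor <;> [linarith [h1.1, h2.1]; linarith [h1.2, h2.2]]
  set r : ℕ → V → ℝ := fun k => T^[k] p0 with hr
  have hrsucc : ∀ k, r (k + 1) = T (r k) := by
    intro k
    show T^[k + 1] p0 = T (T^[k] p0)
    rw [Function.iterate_succ_apply']
  have hInv : ∀ k, (∀ y z : V, (G.dist y z : ℝ) ≤ r k y + r k z) ∧
      (∀ y : V, |r k (g⁻¹ y) - r k y| ≤ L) := by
    intro k
    induction k with
    | zero => exact ⟨hp01, hp0d⟩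
    | succ m ih =>
      rw [hrsucc m]
      exact ⟨hTP1 (r m) ih.1, hTdrift (r m) ih.1 ih.2⟩
  have hr_le : ∀ k (y : V), r (k + 1) y ≤ r k y := by
    intro k y
    rw [hrsucc k]
    have := hstar_le (r k) (hInv k).1 y
    show (r k y + star (r k) y) / 2 ≤ r k y
    linarith
  have hr0 : ∀ k (y : V), 0 ≤ r k y := by
    intro k y
    have := (hInv k).1 y y
    rw [dself y] at this
    linarith
  have hanti : ∀ y : V, Antitone fun k => r k y := fun y =>
    antitone_nat_of_succ_le fun k => hr_le k y
  set ρ : V → ℝ := fun y => ⨅ k : ℕ, r k y with hρ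
  have hbb : ∀ y : V, BddBelow (Set.range fun k : ℕ => r k y) := by
    intro y
    exact ⟨0, by rintro t ⟨k, rfl⟩; exact hr0 k y⟩
  have hρ_le : ∀ k (y : V), ρ y ≤ r k y := fun k y => ciInf_le (hbb y) k
  have hρ0 : ∀ y : V, 0 ≤ ρ y := fun y => le_ciInf fun k => hr0 k y
  have htend : ∀ y : V, Tendsto (fun k => r k y) atTop (nhds (ρ y)) := fun y =>
    tendsto_atTop_ciInf (hanti y) (hbb y)
  have hρP1 : ∀ y z : V, (G.dist y z : ℝ) ≤ ρ y + ρ z := by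
    intro y z
    exact ge_of_tendsto' ((htend y).add (htend z)) fun k => (hInv k).1 y z
  have hρdr : ∀ y : V, |ρ (g⁻¹ y) - ρ y| ≤ L := by
    intro y
    have ht : Tendsto (fun k => |r k (g⁻¹ y) - r k y|) atTop (nhds |ρ (g⁻¹ y) - ρ y|) :=
      ((htend (g⁻¹ y)).sub (htend y)).abs
    exact le_of_tendsto ht (Eventually.of_forall fun k => (hInv k).2 y)
  refine ⟨ρ, hρP1, hρ0, hρdr, ?_⟩
  intro z
  have hbddρ : BddAbove (Set.range fun x : V => ((G.dist x z : ℝ) - ρ x)) := hbdd ρ hρP1 z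
  have hs_ge : ∀ k, 2 * r (k + 1) z - r k z ≤ ⨆ x : V, ((G.dist x z : ℝ) - ρ x) := by
    intro k
    have h1 : star (r k) z ≤ ⨆ x : V, ((G.dist x z : ℝ) - ρ x) := by
      refine ciSup_le fun x => ?_
      have h2 : (G.dist x z : ℝ) - r k x ≤ (G.dist x z : ℝ) - ρ x := by
        have := hρ_le k x; linarith
      exact le_trans h2 (le_ciSup hbddρ x)
    have h2 : r (k + 1) z = (r k z + star (r k) z) / 2 := by rw [hrsucc k]
    linarith
  have ht : Tendsto (fun k => 2 * r (k + 1) z - r k z) atTop (nhds (2 * ρ z - ρ z)) := by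
    have h1 : Tendsto (fun k => r (k + 1) z) atTop (nhds (ρ z)) :=
      (htend z).comp (tendsto_add_atTop_nat 1)
    exact (h1.const_mul 2).sub (htend z)
  have hfin := le_of_tendsto ht (Eventually.of_forall hs_ge)
  linarith

end Aux

end HellyPaper

namespace HellyPaper
/-- A non-elliptic automorphism of a Helly graph of combinatorial dimension at
most N ≥ 1 satisfies d(x, gⁿ·x) ≥ n/(2N) for every vertex x; in particular it
has infinite order. -/
theorem stmt13 {V : Type*} (G : SimpleGraph V) (N : ℕ) (hN : 1 ≤ N)
    (hHelly : IsHellyGraph G) (hdim : DimAtMost G N)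
    (g : Equiv.Perm V) (hg : IsGraphAut G g)
    (hnotell : ¬ ∃ (x : V) (R : ℝ), ∀ n : ℤ, (G.dist x ((g ^ n) x) : ℝ) ≤ R) :
    (∀ (x : V) (n : ℕ), (n : ℝ) / (2 * N) ≤ (G.dist x ((g ^ n) x) : ℝ)) ∧
      ∀ n : ℕ, 1 ≤ n → g ^ n ≠ 1 := by
  classical
  obtain ⟨hconn, hHellyProp⟩ := hHelly
  haveI hVne : Nonempty V := hconn.nonempty
  have tri : ∀ a b c : V, (G.dist a c : ℝ) ≤ (G.dist a b : ℝ) + (G.dist b c : ℝ) := by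
    intro a b c
    exact_mod_cast hconn.dist_triangle (u := a) (v := b) (w := c)
  have dcomm : ∀ a b : V, (G.dist a b : ℝ) = (G.dist b a : ℝ) := by
    intro a b
    exact_mod_cast congrArg (Nat.cast : ℕ → ℝ) (SimpleGraph.dist_comm (u := a) (v := b))
  have hNR : (1 : ℝ) ≤ (N : ℝ) := by exact_mod_cast hN
  have h2N : (0 : ℝ) < 2 * (N : ℝ) := by linarith
  suffices part1 : ∀ (x : V) (n : ℕ), (n : ℝ) / (2 * N) ≤ (G.dist x ((g ^ n) x) : ℝ) by
    refine ⟨part1, fun n hn hgn => ?_⟩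
    obtain ⟨x⟩ := hVne
    have h1 := part1 x n
    rw [hgn] at h1
    simp only [Equiv.Perm.coe_one, id_eq, SimpleGraph.dist_self, Nat.cast_zero] at h1
    have hn0 : (0 : ℝ) < (n : ℝ) := by exact_mod_cast hn
    have := div_pos hn0 h2N
    linarith
  by_contra hcon
  push_neg at hcon
  obtain ⟨x₀, n, hbad⟩ := hcon
  have hn1 : 1 ≤ n := by
    by_contra hn0
    have hn' : n = 0 := by omega
    subst hn'
    simp [SimpleGraph.dist_self] at hbad
  set D : ℕ := G.dist x₀ ((g ^ n) x₀) with hD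
  have hnR : (0 : ℝ) < (n : ℝ) := by exact_mod_cast hn1
  set L : ℝ := (D : ℝ) / (n : ℝ) with hL
  have hL0 : 0 ≤ L := by positivity
  have hDn : (D : ℝ) * (2 * (N : ℝ)) < (n : ℝ) := by
    have h1 := (lt_div_iff₀ h2N).mp hbad
    linarith
  have hwin : ∀ m : ℕ, m ≤ N + 1 → (m : ℝ) * L < 1 := by
    intro m hm
    have hmR : (m : ℝ) ≤ (N : ℝ) + 1 := by exact_mod_cast hm
    have hD0 : (0 : ℝ) ≤ (D : ℝ) := Nat.cast_nonneg D
    rw [hL, mul_div_assoc', div_lt_one hnR]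
    nlinarith
  -- an averaged metric form with drift at most L
  set p0 : V → ℝ := fun y => (∑ i ∈ Finset.range n, (G.dist ((g ^ i) x₀) y : ℝ)) / n with hp0
  have hdg : ∀ x y : V, G.dist (g x) (g y) = G.dist x y := fun x y => autDist hconn hg x y
  have hp01 : ∀ y z : V, (G.dist y z : ℝ) ≤ p0 y + p0 z := by
    intro y z
    have hterm : ∀ i : ℕ,
        (G.dist y z : ℝ) ≤ (G.dist ((g ^ i) x₀) y : ℝ) + (G.dist ((g ^ i) x₀) z : ℝ) := by
      intro i
      have h1 := tri y ((g ^ i) x₀) z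
      rw [dcomm y ((g ^ i) x₀)] at h1
      exact h1
    have hsum : (n : ℝ) * (G.dist y z : ℝ) ≤
        ∑ i ∈ Finset.range n, ((G.dist ((g ^ i) x₀) y : ℝ) + (G.dist ((g ^ i) x₀) z : ℝ)) := by
      calc (n : ℝ) * (G.dist y z : ℝ) = ∑ _i ∈ Finset.range n, (G.dist y z : ℝ) := by
            rw [Finset.sum_const, Finset.card_range, nsmul_eq_mul]
        _ ≤ _ := Finset.sum_le_sum fun i _ => hterm i
    rw [hp0]
    dsimp only
    rw [← add_div, ← Finset.sum_add_distrib, le_div_iff₀ hnR, mul_comm]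
    exact hsum
  have hp0d : ∀ y : V, |p0 (g⁻¹ y) - p0 y| ≤ L := by
    intro y
    set f : ℕ → ℝ := fun i => (G.dist ((g ^ i) x₀) y : ℝ) with hf
    have hshift : ∀ i : ℕ, (G.dist ((g ^ i) x₀) (g⁻¹ y) : ℝ) = f (i + 1) := by
      intro i
      have h1 := hdg ((g ^ i) x₀) (g⁻¹ y)
      rw [Equiv.Perm.apply_inv_self] at h1
      have h2 : g ((g ^ i) x₀) = (g ^ (i + 1)) x₀ := by rw [pow_succ']; rfl
      rw [h2] at h1
      show (G.dist ((g ^ i) x₀) (g⁻¹ y) : ℝ) = (G.dist ((g ^ (i + 1)) x₀) y : ℝ)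
      exact_mod_cast congrArg (Nat.cast : ℕ → ℝ) h1.symm
    have hsum1 : ∑ i ∈ Finset.range n, (G.dist ((g ^ i) x₀) (g⁻¹ y) : ℝ)
        = ∑ i ∈ Finset.range n, f (i + 1) :=
      Finset.sum_congr rfl fun i _ => hshift i
    have e1 := Finset.sum_range_succ' f n
    have e2 := Finset.sum_range_succ f n
    have htel : ∑ i ∈ Finset.range n, f (i + 1) = (∑ i ∈ Finset.range n, f i) + f n - f 0 := by
      linarith [e1, e2]
    have habs : |f n - f 0| ≤ (D : ℝ) := by
      have t1 := tri ((g ^ n) x₀) x₀ y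
      have t2 := tri x₀ ((g ^ n) x₀) y
      have hd0 : (G.dist ((g ^ n) x₀) x₀ : ℝ) = (D : ℝ) := by
        rw [dcomm, ← hD]
      have hd1 : (G.dist x₀ ((g ^ n) x₀) : ℝ) = (D : ℝ) := by rw [← hD]
      have hf0 : f 0 = (G.dist x₀ y : ℝ) := by rw [hf]; simp
      have hfn : f n = (G.dist ((g ^ n) x₀) y : ℝ) := by rw [hf]
      rw [abs_le, hf0, hfn]
      constructor
      · linarith [t2, hd1]
      · linarith [t1, hd0]
    have hcalc : p0 (g⁻¹ y) - p0 y = (f n - f 0) / n := by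
      simp only [hp0]
      rw [← hf, hsum1, htel]
      ring
    rw [hcalc, abs_div, abs_of_pos hnR, hL]
    exact (div_le_div_iff_of_pos_right hnR).mpr habs
  obtain ⟨ρ, hρP1, hρ0, hρdr, hρP2⟩ := exists_good_rho G g hdg L p0 hp01 hp0d
  have hfor : ∀ y : V, |ρ (g y) - ρ y| ≤ L := by
    intro y
    have h1 := hρdr (g y)
    rw [Equiv.Perm.inv_apply_self, abs_sub_comm] at h1
    exact h1
  have hiter : ∀ (k : ℕ) (y : V), |ρ ((g ^ k) y) - ρ y| ≤ (k : ℝ) * L := by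
    intro k
    induction k with
    | zero => intro y; simp
    | succ m ih =>
      intro y
      have h1 := ih (g y)
      have h2 := hfor y
      have h3 : (g ^ (m + 1)) y = (g ^ m) (g y) := by rw [pow_succ]; rfl
      have h4 := abs_sub_le (ρ ((g ^ m) (g y))) (ρ (g y)) (ρ y)
      rw [h3]
      push_cast
      calc |ρ ((g ^ m) (g y)) - ρ y|
          ≤ |ρ ((g ^ m) (g y)) - ρ (g y)| + |ρ (g y) - ρ y| := h4
        _ ≤ (m : ℝ) * L + L := add_le_add h1 h2
        _ = ((m : ℝ) + 1) * L := by ring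
  -- the set phi G ρ is a clique
  have hsupbd : ∀ z : V, z ∈ phi G ρ → ρ z ≤ 1 := by
    intro z hz
    refine le_trans (hρP2 z) (ciSup_le fun x => ?_)
    have hx : (G.dist x z : ℝ) ≤ (⌈ρ x⌉ : ℝ) := hz x
    have hc1 := Int.ceil_lt_add_one (ρ x)
    linarith
  have hclique : G.IsClique (phi G ρ) := by
    intro z hz z' hz' hne
    have h1 : ρ z' ≤ 1 := hsupbd z' hz'
    have h2 : (G.dist z' z : ℝ) ≤ (⌈ρ z'⌉ : ℝ) := hz z'
    have h3 : ⌈ρ z'⌉ ≤ 1 := by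
      have h4 := Int.ceil_le_ceil (R := ℝ) h1
      rwa [Int.ceil_one] at h4
    have h4 : G.dist z' z ≤ 1 := by
      have h5 : (G.dist z' z : ℝ) ≤ 1 := by
        calc (G.dist z' z : ℝ) ≤ (⌈ρ z'⌉ : ℝ) := h2
          _ ≤ 1 := by exact_mod_cast h3
      exact_mod_cast h5
    have h6 : G.dist z' z ≠ 0 := by
      simp only [ne_eq, hconn.dist_eq_zero_iff]
      exact fun h => hne h.symm
    have h7 : G.dist z' z = 1 := by omega
    exact (SimpleGraph.dist_eq_one_iff_adj.mp h7).symm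
  set rad : V → ℕ := fun x => (⌈ρ x⌉).toNat with hrad
  have hradR : ∀ x : V, ((rad x : ℕ) : ℝ) = ((⌈ρ x⌉ : ℤ) : ℝ) := by
    intro x
    have h1 : ((⌈ρ x⌉).toNat : ℤ) = ⌈ρ x⌉ := Int.toNat_of_nonneg (Int.ceil_nonneg (hρ0 x))
    exact_mod_cast congrArg (Int.cast : ℤ → ℝ) h1
  have hrad_ge : ∀ x : V, ρ x ≤ ((rad x : ℕ) : ℝ) := by
    intro x
    rw [hradR x]
    exact Int.le_ceil (ρ x)
  have hdistinv : ∀ (j : ℕ) (x z : V),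
      G.dist ((g ^ j) x) z = G.dist x (((g ^ j)⁻¹ : Equiv.Perm V) z) := by
    intro j x z
    conv_lhs => rw [show z = (g ^ j) (((g ^ j)⁻¹ : Equiv.Perm V) z) from
      (Equiv.Perm.apply_inv_self (g ^ j) z).symm]
    rw [autDist hconn (autPow hg j)]
  have hball_iff : ∀ (j : ℕ) (x z : V),
      (G.dist ((g ^ j) x) z ≤ rad x) ↔
        ((G.dist x (((g ^ j)⁻¹ : Equiv.Perm V) z) : ℝ) ≤ ((⌈ρ x⌉ : ℤ) : ℝ)) := by
    intro j x z
    rw [← hdistinv j x z, ← hradR x]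
    exact (Nat.cast_le (α := ℝ)).symm
  set A : ℕ → Set V := fun m => {z | ∀ j ≤ m, (((g ^ j)⁻¹ : Equiv.Perm V)) z ∈ phi G ρ} with hA
  have hAsub : ∀ {s t : ℕ}, t ≤ s → A s ⊆ A t := by
    intro s t hts z hz j hj
    exact hz j (le_trans hj hts)
  have hA0 : ∀ z : V, z ∈ A 0 → z ∈ phi G ρ := by
    intro z hz
    have h1 := hz 0 le_rfl
    simpa using h1
  have hpowinv : ∀ (j : ℕ) (z : V),
      (((g ^ (j + 1))⁻¹ : Equiv.Perm V)) z = (((g ^ j)⁻¹ : Equiv.Perm V)) (g⁻¹ z) := by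
    intro j z
    rw [pow_succ', mul_inv_rev]
    rfl
  have hArec : ∀ (s : ℕ) (z : V), z ∈ A (s + 1) ↔ (z ∈ phi G ρ ∧ g⁻¹ z ∈ A s) := by
    intro s z
    constructor
    · intro h
      refine ⟨?_, ?_⟩
      · have h1 := h 0 (Nat.zero_le _)
        simpa using h1
      · intro j hj
        have h1 := h (j + 1) (by omega)
        rwa [hpowinv j z] at h1
    · rintro ⟨h0, h1⟩ j hj
      match j with
      | 0 => simpa using h0
      | (j' + 1) =>
        have h2 := h1 j' (by omega)
        rwa [← hpowinv j' z] at h2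
  have hAne : ∀ m : ℕ, m ≤ N + 1 → (A m).Nonempty := by
    intro m hm
    have key : ∀ j i : ℕ, j ≤ i → i ≤ m → ∀ x y : V,
        G.dist ((g ^ j) x) ((g ^ i) y) ≤ rad x + rad y := by
      intro j i hji him x y
      have hsplit : ((g ^ i) y) = (g ^ j) ((g ^ (i - j)) y) := by
        rw [← Equiv.Perm.mul_apply, ← pow_add, Nat.add_sub_cancel' hji]
      rw [hsplit, autDist hconn (autPow hg j)]
      have h1 : (G.dist x ((g ^ (i - j)) y) : ℝ) ≤ ρ x + ρ ((g ^ (i - j)) y) := hρP1 _ _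
      have h2 : ρ ((g ^ (i - j)) y) ≤ ρ y + ((i - j : ℕ) : ℝ) * L := by
        have h3 := (abs_le.mp (hiter (i - j) y)).2
        linarith
      have h3 : ((i - j : ℕ) : ℝ) * L < 1 := hwin (i - j) (by omega)
      have h4 : (G.dist x ((g ^ (i - j)) y) : ℝ) < ((rad x : ℕ) : ℝ) + ((rad y : ℕ) : ℝ) + 1 := by
        have hgx := hrad_ge x
        have hgy := hrad_ge y
        linarith
      have h5 : G.dist x ((g ^ (i - j)) y) < rad x + rad y + 1 := by exact_mod_cast h4
      omega
    have hpair : ∀ p ∈ {q : V × ℕ | ∃ j ≤ m, ∃ x : V, q = ((g ^ j) x, rad x)},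
        ∀ q ∈ {q : V × ℕ | ∃ j ≤ m, ∃ x : V, q = ((g ^ j) x, rad x)},
        (ball G p.1 p.2 ∩ ball G q.1 q.2).Nonempty := by
      rintro p ⟨j, hj, x, rfl⟩ q ⟨i, hi, y, rfl⟩
      rcases le_total j i with hji | hij
      · obtain ⟨z, hz1, hz2⟩ :=
          walkSplit hconn ((g ^ j) x) ((g ^ i) y) (rad x) (rad y) (key j i hji hi x y)
        refine ⟨z, hz1, ?_⟩
        show G.dist ((g ^ i) y) z ≤ rad y
        rw [SimpleGraph.dist_comm]
        exact hz2
      · obtain ⟨z, hz1, hz2⟩ :=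
          walkSplit hconn ((g ^ i) y) ((g ^ j) x) (rad y) (rad x) (key i j hij hj y x)
        refine ⟨z, ?_, hz1⟩
        show G.dist ((g ^ j) x) z ≤ rad x
        rw [SimpleGraph.dist_comm]
        exact hz2
    obtain ⟨z, hz⟩ := hHellyProp _ hpair
    rw [Set.mem_iInter₂] at hz
    refine ⟨z, ?_⟩
    intro j hj x
    have h1 := hz ((g ^ j) x, rad x) ⟨j, hj, x, rfl⟩
    exact (hball_iff j x z).mp h1
  have hAround : ∀ m : ℕ, m ≤ N + 1 → IsRoundClique G (A m) := by
    intro m hm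
    refine ⟨hAne m hm, ?_, ?_⟩
    · have hsub : A m ⊆ phi G ρ := fun z hz => hA0 z (hAsub (Nat.zero_le m) hz)
      exact hclique.subset hsub
    · refine ⟨{q : V × ℕ | ∃ j ≤ m, ∃ x : V, q = ((g ^ j) x, rad x)}, ?_⟩
      ext z
      rw [Set.mem_iInter₂]
      constructor
      · intro hz
        rintro q ⟨j, hj, x, rfl⟩
        exact (hball_iff j x z).mpr (hz j hj x)
      · intro hz j hj x
        exact (hball_iff j x z).mp (hz ((g ^ j) x, rad x) ⟨j, hj, x, rfl⟩)
  by_cases hEq : ∃ m, m ≤ N ∧ A (m + 1) = A m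
  · obtain ⟨m, hm, hfixA⟩ := hEq
    have hstab : ∀ k : ℕ, A (m + k) = A m := by
      intro k
      induction k with
      | zero => rfl
      | succ t ih =>
        have e1 : m + (t + 1) = (m + t) + 1 := by omega
        rw [e1]
        ext z
        rw [hArec (m + t) z, ih, ← hArec m z, hfixA]
    obtain ⟨z, hz⟩ := hAne m (by omega)
    have hbound : ∀ j : ℕ,
        (G.dist x₀ (((g ^ j)⁻¹ : Equiv.Perm V) z) : ℝ) ≤ ((⌈ρ x₀⌉ : ℤ) : ℝ) := by
      intro j
      have hz' : z ∈ A (m + j) := by rw [hstab j]; exact hz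
      exact hz' j (by omega) x₀
    refine absurd ?_ hnotell
    refine ⟨z, 2 * ((⌈ρ x₀⌉ : ℤ) : ℝ), ?_⟩
    intro t
    have hz0 : (G.dist x₀ z : ℝ) ≤ ((⌈ρ x₀⌉ : ℤ) : ℝ) := by
      have h1 := hbound 0
      simpa using h1
    cases t with
    | ofNat k =>
      rw [show ((Int.ofNat k : ℤ)) = (k : ℤ) from rfl, zpow_natCast]
      have h1 : G.dist z ((g ^ k) z) = G.dist (((g ^ k)⁻¹ : Equiv.Perm V) z) z := by
        have h2 := autDist hconn (autInv (autPow hg k)) z ((g ^ k) z)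
        rw [show ((g ^ k)⁻¹ : Equiv.Perm V) ((g ^ k) z) = z from
          Equiv.Perm.inv_apply_self _ z] at h2
        exact h2.symm
      have h5 : (G.dist z ((g ^ k) z) : ℝ) = (G.dist (((g ^ k)⁻¹ : Equiv.Perm V) z) z : ℝ) := by
        exact_mod_cast congrArg (Nat.cast : ℕ → ℝ) h1
      have h3 := tri (((g ^ k)⁻¹ : Equiv.Perm V) z) x₀ z
      rw [dcomm (((g ^ k)⁻¹ : Equiv.Perm V) z) x₀] at h3
      have h4 := hbound k
      rw [h5]
      linarith
    | negSucc k =>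
      rw [zpow_negSucc]
      have h3 := tri z x₀ (((g ^ (k + 1))⁻¹ : Equiv.Perm V) z)
      rw [dcomm z x₀] at h3
      have h4 := hbound (k + 1)
      linarith
  · push_neg at hEq
    have hss : ∀ m : ℕ, m ≤ N → A (m + 1) < A m := by
      intro m hm
      exact lt_of_le_of_ne (hAsub (Nat.le_succ m)) (hEq m hm)
    have hchain : ∀ b : ℕ, b ≤ N + 1 → ∀ a : ℕ, a < b → A b < A a := by
      intro b
      induction b with
      | zero => intro _ a ha; exact absurd ha (Nat.not_lt_zero a)
      | succ t ih =>
        intro hb a ha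
        have h1 : A (t + 1) < A t := hss t (by omega)
        rcases Nat.lt_succ_iff_lt_or_eq.mp ha with h | h
        · exact lt_trans h1 (ih (by omega) a h)
        · rw [h]
          exact h1
    have hsm : StrictMono (fun i : Fin (N + 1 + 1) => A (N + 1 - (i : ℕ))) := by
      intro i j hij
      have h1 : (i : ℕ) < (j : ℕ) := hij
      have h2 : (j : ℕ) ≤ N + 1 := by
        have := j.isLt
        omega
      exact hchain (N + 1 - (i : ℕ)) (by omega) (N + 1 - (j : ℕ)) (by omega)
    have hrc : ∀ i : Fin (N + 1 + 1), IsRoundClique G (A (N + 1 - (i : ℕ))) := fun i =>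
      hAround _ (by omega)
    have hfinal := hdim (N + 1) (fun i => A (N + 1 - (i : ℕ))) hrc hsm
    omega

end HellyPaper
end
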